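/- arXiv:2309.01107 — 10 statements merged into one kernel-verified Lean document; each statement's English description precedes it below -/
import Mathlib

section
/- Fix a policy π, a nominal reward R₀ : S → A → ℝ, a radius α > 0, and p ∈ (1,∞) with Hölder conjugate q = p/(p-1). Define the worst-case reward R* : S → A → ℝ by R*(s,a) = R₀(s,a) - α * (d^π(s,a) / ‖d^π‖_q)^(q-1) (note ‖d^π‖_q > 0 since d^π(s) > 0 for every s). Then ‖R* - R₀‖_p = α, and for every R : S → A → ℝ with ‖R - R₀‖_p ≤ α one has ρ^π_{R*} ≤ ρ^π_R; that is, R* attains the minimum of the return ρ^π_R over the L_p ball of radius α around R₀. -/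
open Finset

noncomputable section

/-- `P^π(s,s') = ∑ a, π s a * P s a s'`. -/
def Pmat {S A : Type*} [Fintype A] (P : S → A → S → ℝ) (π : S → A → ℝ) :
    Matrix S S ℝ := fun s s' => ∑ a, π s a * P s a s'

/-- state occupation measure `d^π = μᵀ (I - γ P^π)⁻¹`. -/
def dPi {S A : Type*} [Fintype S] [Fintype A] [DecidableEq S]
    (γ : ℝ) (P : S → A → S → ℝ) (μ : S → ℝ) (π : S → A → ℝ) : S → ℝ :=
  fun s' => ∑ s, μ s * (1 - γ • Pmat P π)⁻¹ s s'

/-- state-action occupation measure `d^π(s,a) = d^π(s) * π s a`. -/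
def dSA {S A : Type*} [Fintype S] [Fintype A] [DecidableEq S]
    (γ : ℝ) (P : S → A → S → ℝ) (μ : S → ℝ) (π : S → A → ℝ) : S → A → ℝ :=
  fun s a => dPi γ P μ π s * π s a

/-- return `ρ^π_R = ∑_{s,a} d^π(s,a) * R(s,a)`. -/
def mdpReturn {S A : Type*} [Fintype S] [Fintype A] [DecidableEq S]
    (γ : ℝ) (P : S → A → S → ℝ) (μ : S → ℝ) (π : S → A → ℝ) (R : S → A → ℝ) : ℝ :=
  ∑ s, ∑ a, dSA γ P μ π s a * R s a

/-- `‖x‖_r = (∑_{s,a} |x(s,a)|^r)^{1/r}` with real exponents via `Real.rpow`. -/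
def LpNorm {S A : Type*} [Fintype S] [Fintype A] (r : ℝ) (x : S → A → ℝ) : ℝ :=
  (∑ s, ∑ a, |x s a| ^ r) ^ (1 / r)

end

section auxpos

attribute [local instance] Matrix.linftyOpNormedAddCommGroup Matrix.linftyOpNormedRing

lemma dPi_ge {S A : Type*} [Fintype S] [Fintype A] [Nonempty S] [Nonempty A] [DecidableEq S]
    (γ : ℝ) (hγ0 : 0 ≤ γ) (hγ1 : γ < 1)
    (P : S → A → S → ℝ) (hP : ∀ s a s', 0 ≤ P s a s')
    (hPsum : ∀ s a, ∑ s', P s a s' = 1)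
    (μ : S → ℝ) (hμ : ∀ s, 0 < μ s)
    (π : S → A → ℝ) (hπ : ∀ s a, 0 ≤ π s a) (hπsum : ∀ s, ∑ a, π s a = 1) :
    ∀ s', μ s' ≤ dPi γ P μ π s' := by
  haveI : @CompleteSpace (Matrix S S ℝ) (Matrix.linftyOpNormedRing (n := S) (α := ℝ)).toUniformSpace :=
    (inferInstance : CompleteSpace (S → S → ℝ))
  set M : Matrix S S ℝ := γ • Pmat P π with hM
  have hM0 : ∀ i j, 0 ≤ M i j := by
    intro i j
    exact mul_nonneg hγ0 (Finset.sum_nonneg fun a _ => mul_nonneg (hπ i a) (hP i a j))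
  have hMrow : ∀ i, ∑ j, M i j = γ := by
    intro i
    have : ∑ j, Pmat P π i j = 1 := by
      unfold Pmat
      rw [Finset.sum_comm]
      simp only [← Finset.mul_sum, hPsum, mul_one, hπsum]
    simp only [hM, Matrix.smul_apply, smul_eq_mul, ← Finset.mul_sum, this, mul_one]
  have hMn : ‖M‖ < 1 := by
    rw [Matrix.linfty_opNorm_def]
    have hsup : (Finset.univ.sup fun i : S => ∑ j, ‖M i j‖₊) ≤ γ.toNNReal := by
      refine Finset.sup_le fun i _ => ?_
      rw [← NNReal.coe_le_coe]
      push_cast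
      rw [Real.coe_toNNReal _ hγ0]
      have : ∑ j, ‖M i j‖ = γ := by
        rw [← hMrow i]
        exact Finset.sum_congr rfl fun j _ => by
          rw [Real.norm_eq_abs, abs_of_nonneg (hM0 i j)]
      exact this.le
    have := NNReal.coe_le_coe.2 hsup
    rw [Real.coe_toNNReal _ hγ0] at this
    exact lt_of_le_of_lt this hγ1
  have hpow : ∀ n i j, 0 ≤ (M ^ n) i j := by
    intro n
    induction n with
    | zero => intro i j; by_cases h : i = j <;> simp [h, Matrix.one_apply]
    | succ n ih =>
      intro i j
      rw [pow_succ, Matrix.mul_apply]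
      exact Finset.sum_nonneg fun k _ => mul_nonneg (ih i k) (hM0 k j)
  have hsum : HasSum (fun n : ℕ => M ^ n) (Ring.inverse (1 - M)) :=
    hasSum_geom_series_inverse M hMn
  have hinv : (1 - M)⁻¹ = Ring.inverse (1 - M) := Matrix.nonsing_inv_eq_ringInverse _
  have hEntry : ∀ i j, HasSum (fun n : ℕ => (M ^ n) i j) ((1 - M)⁻¹ i j) := by
    intro i j
    rw [hinv]
    refine hsum.map (AddMonoidHom.mk' (fun N : Matrix S S ℝ => N i j) (fun a b => rfl)) ?_
    refine AddMonoidHomClass.continuous_of_bound _ 1 fun N => ?_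
    rw [one_mul]
    have h1 : ‖N i j‖₊ ≤ ‖N‖₊ := by
      rw [Matrix.linfty_opNNNorm_def]
      calc ‖N i j‖₊ ≤ ∑ k, ‖N i k‖₊ := Finset.single_le_sum (f := fun k => ‖N i k‖₊)
            (fun k _ => zero_le) (Finset.mem_univ j)
        _ ≤ _ := Finset.le_sup (f := fun i => ∑ k, ‖N i k‖₊) (Finset.mem_univ i)
    exact h1
  have hinv0 : ∀ i j, 0 ≤ (1 - M)⁻¹ i j := by
    intro i j
    rw [← (hEntry i j).tsum_eq]
    exact tsum_nonneg fun n => hpow n i j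
  have hdiag : ∀ i, 1 ≤ (1 - M)⁻¹ i i := by
    intro i
    have := Summable.le_tsum (hEntry i i).summable 0 fun n _ => hpow n i i
    rw [(hEntry i i).tsum_eq] at this
    simpa using this
  intro s'
  unfold dPi
  calc μ s' = μ s' * 1 := (mul_one _).symm
    _ ≤ μ s' * (1 - M)⁻¹ s' s' := mul_le_mul_of_nonneg_left (hdiag s') (hμ s').le
    _ ≤ ∑ s, μ s * (1 - M)⁻¹ s s' :=
        Finset.single_le_sum (f := fun s => μ s * (1 - M)⁻¹ s s')
          (fun s _ => mul_nonneg (hμ s).le (hinv0 s s')) (Finset.mem_univ s')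

end auxpos

theorem stmt_1 {S A : Type*} [Fintype S] [Fintype A] [Nonempty S] [Nonempty A] [DecidableEq S]
    (γ : ℝ) (hγ0 : 0 ≤ γ) (hγ1 : γ < 1)
    (P : S → A → S → ℝ) (hP : ∀ s a s', 0 ≤ P s a s')
    (hPsum : ∀ s a, ∑ s', P s a s' = 1)
    (μ : S → ℝ) (hμ : ∀ s, 0 < μ s) (hμsum : ∑ s, μ s = 1)
    (π : S → A → ℝ) (hπ : ∀ s a, 0 ≤ π s a) (hπsum : ∀ s, ∑ a, π s a = 1)
    (R₀ : S → A → ℝ) (α : ℝ) (hα : 0 < α)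
    (p q : ℝ) (hp : 1 < p) (hq : q = p / (p - 1))
    (Rstar : S → A → ℝ)
    (hRstar : ∀ s a, Rstar s a =
      R₀ s a - α * (dSA γ P μ π s a / LpNorm q (dSA γ P μ π)) ^ (q - 1)) :
    LpNorm p (fun s a => Rstar s a - R₀ s a) = α ∧
    ∀ R : S → A → ℝ, LpNorm p (fun s a => R s a - R₀ s a) ≤ α →
      mdpReturn γ P μ π Rstar ≤ mdpReturn γ P μ π R := by
  -- abbreviations
  set d : S → A → ℝ := dSA γ P μ π with hd
  set N : ℝ := LpNorm q d with hN
  -- positivity of the occupation measure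
  have hdPi : ∀ s, 0 < dPi γ P μ π s := fun s =>
    lt_of_lt_of_le (hμ s) (dPi_ge γ hγ0 hγ1 P hP hPsum μ hμ π hπ hπsum s)
  have hd0 : ∀ s a, 0 ≤ d s a := fun s a => mul_nonneg (hdPi s).le (hπ s a)
  -- exponent facts
  have hp0 : 0 < p := lt_trans one_pos hp
  have hpq : p.HolderConjugate q := (Real.holderConjugate_iff_eq_conjExponent hp).2 hq
  have hq1 : 1 < q := hpq.symm.lt
  have hq0 : 0 < q := lt_trans one_pos hq1
  have hqp : (q - 1) * p = q := hpq.symm.sub_one_mul_conj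
  -- double sums as sums over pairs
  have hsum2 : ∀ f : S → A → ℝ, (∑ s, ∑ a, f s a) = ∑ z : S × A, f z.1 z.2 := fun f =>
    (Fintype.sum_prod_type (f := fun z : S × A => f z.1 z.2)).symm
  -- the q-norm of d
  have hNdef : N = (∑ z : S × A, d z.1 z.2 ^ q) ^ (1 / q) := by
    rw [hN]
    unfold LpNorm
    rw [hsum2 (fun s a => |d s a| ^ q)]
    congr 1
    exact Finset.sum_congr rfl fun z _ => by rw [abs_of_nonneg (hd0 z.1 z.2)]
  have hS : 0 < ∑ z : S × A, d z.1 z.2 ^ q := by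
    obtain ⟨s₀⟩ := (inferInstance : Nonempty S)
    have hex : ∃ a, 0 < π s₀ a := by
      by_contra h
      push_neg at h
      have : ∑ a, π s₀ a = 0 :=
        Finset.sum_eq_zero fun a _ => le_antisymm (h a) (hπ s₀ a)
      rw [hπsum s₀] at this; norm_num at this
    obtain ⟨a₀, ha₀⟩ := hex
    refine Finset.sum_pos' (fun z _ => Real.rpow_nonneg (hd0 z.1 z.2) _) ?_
    refine ⟨(s₀, a₀), Finset.mem_univ _, ?_⟩
    exact Real.rpow_pos_of_pos (mul_pos (hdPi s₀) ha₀) _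
  have hN0 : 0 < N := hNdef ▸ Real.rpow_pos_of_pos hS _
  have hNq : N ^ q = ∑ z : S × A, d z.1 z.2 ^ q := by
    rw [hNdef, ← Real.rpow_mul hS.le, one_div, inv_mul_cancel₀ hq0.ne', Real.rpow_one]
  -- pointwise formula for the deviation
  have habs2 : ∀ s a, |Rstar s a - R₀ s a| = α * (d s a / N) ^ (q - 1) := by
    intro s a
    have h1 : Rstar s a - R₀ s a = -(α * (d s a / N) ^ (q - 1)) := by
      rw [hRstar]; ring
    rw [h1, abs_neg, abs_of_nonneg (mul_nonneg hα.le
      (Real.rpow_nonneg (div_nonneg (hd0 s a) hN0.le) _))]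
  -- ∑ d * (d/N)^(q-1) = N
  have hkey : ∑ z : S × A, d z.1 z.2 * (d z.1 z.2 / N) ^ (q - 1) = N := by
    have hterm : ∀ z : S × A, d z.1 z.2 * (d z.1 z.2 / N) ^ (q - 1)
        = d z.1 z.2 ^ q / N ^ (q - 1) := by
      intro z
      rw [Real.div_rpow (hd0 z.1 z.2) hN0.le]
      have : d z.1 z.2 ^ q = d z.1 z.2 * d z.1 z.2 ^ (q - 1) := by
        have h1 : q = 1 + (q - 1) := by ring
        nth_rewrite 1 [h1]
        rw [Real.rpow_add' (hd0 z.1 z.2) (by rw [← h1]; exact hq0.ne'), Real.rpow_one]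
      rw [this]; ring
    rw [Finset.sum_congr rfl fun z _ => hterm z, ← Finset.sum_div, ← hNq,
      ← Real.rpow_sub hN0]
    norm_num
  constructor
  · -- the norm computation
    unfold LpNorm
    rw [hsum2 (fun s a => |Rstar s a - R₀ s a| ^ p)]
    have hterm : ∀ z : S × A, |Rstar z.1 z.2 - R₀ z.1 z.2| ^ p
        = α ^ p * (d z.1 z.2 ^ q / N ^ q) := by
      intro z
      have h0 : (0:ℝ) ≤ d z.1 z.2 / N := div_nonneg (hd0 z.1 z.2) hN0.le
      rw [habs2, Real.mul_rpow hα.le (Real.rpow_nonneg h0 _),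
        ← Real.rpow_mul h0, hqp, Real.div_rpow (hd0 z.1 z.2) hN0.le]
    rw [Finset.sum_congr rfl fun z _ => hterm z, ← Finset.mul_sum, ← Finset.sum_div, ← hNq,
      div_self (by positivity : N ^ q ≠ 0), mul_one,
      ← Real.rpow_mul hα.le, mul_one_div, div_self hp0.ne', Real.rpow_one]
  · -- minimality over the Lp ball
    intro R hR
    have hret : ∀ R' : S → A → ℝ,
        mdpReturn γ P μ π R' = ∑ z : S × A, d z.1 z.2 * R' z.1 z.2 := by
      intro R'
      unfold mdpReturn
      rw [← hd, hsum2 (fun s a => d s a * R' s a)]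
    rw [hret, hret]
    have hRstar' : ∀ z : S × A, d z.1 z.2 * Rstar z.1 z.2
        = d z.1 z.2 * R₀ z.1 z.2 - d z.1 z.2 * (α * (d z.1 z.2 / N) ^ (q - 1)) := by
      intro z; rw [hRstar]; ring
    rw [Finset.sum_congr rfl fun z _ => hRstar' z, Finset.sum_sub_distrib]
    have hsplit : ∑ z : S × A, d z.1 z.2 * (α * (d z.1 z.2 / N) ^ (q - 1)) = α * N := by
      calc ∑ z : S × A, d z.1 z.2 * (α * (d z.1 z.2 / N) ^ (q - 1))
          = α * ∑ z : S × A, d z.1 z.2 * (d z.1 z.2 / N) ^ (q - 1) := by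
            rw [Finset.mul_sum]
            exact Finset.sum_congr rfl fun z _ => by ring
        _ = α * N := by rw [hkey]
    rw [hsplit]
    -- it suffices to bound ∑ d * (R₀ - R) by α * N
    have hholder : ∑ z : S × A, d z.1 z.2 * (R₀ z.1 z.2 - R z.1 z.2) ≤ α * N := by
      have h1 := Real.inner_le_Lp_mul_Lq (Finset.univ : Finset (S × A))
        (fun z => d z.1 z.2) (fun z => R₀ z.1 z.2 - R z.1 z.2) hpq.symm
      have h2 : (∑ z : S × A, |d z.1 z.2| ^ q) ^ (1 / q) = N := by
        rw [hNdef]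
        congr 1
        exact Finset.sum_congr rfl fun z _ => by rw [abs_of_nonneg (hd0 z.1 z.2)]
      have h3 : (∑ z : S × A, |R₀ z.1 z.2 - R z.1 z.2| ^ p) ^ (1 / p) ≤ α := by
        have : LpNorm p (fun s a => R s a - R₀ s a)
            = (∑ z : S × A, |R₀ z.1 z.2 - R z.1 z.2| ^ p) ^ (1 / p) := by
          unfold LpNorm
          rw [hsum2 (fun s a => |R s a - R₀ s a| ^ p)]
          congr 1
          exact Finset.sum_congr rfl fun z _ => by rw [abs_sub_comm]
        rw [← this]; exact hR
      calc ∑ z : S × A, d z.1 z.2 * (R₀ z.1 z.2 - R z.1 z.2)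
          ≤ (∑ z : S × A, |d z.1 z.2| ^ q) ^ (1 / q)
            * (∑ z : S × A, |R₀ z.1 z.2 - R z.1 z.2| ^ p) ^ (1 / p) := h1
        _ = N * (∑ z : S × A, |R₀ z.1 z.2 - R z.1 z.2| ^ p) ^ (1 / p) := by rw [h2]
        _ ≤ N * α := mul_le_mul_of_nonneg_left h3 hN0.le
        _ = α * N := mul_comm _ _
    have hexpand : ∑ z : S × A, d z.1 z.2 * (R₀ z.1 z.2 - R z.1 z.2)
        = ∑ z : S × A, d z.1 z.2 * R₀ z.1 z.2 - ∑ z : S × A, d z.1 z.2 * R z.1 z.2 := by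
      rw [← Finset.sum_sub_distrib]
      exact Finset.sum_congr rfl fun z _ => by ring
    linarith [hholder, hexpand ▸ hholder]
end

section
/- Fix a policy π, a nominal reward R₀ : S → A → ℝ, a radius α > 0, and p ∈ (1,∞) with Hölder conjugate q = p/(p-1). Then the infimum of the return over the L_p ball around the nominal reward equals a regularized nominal return: ⨅ {ρ^π_R | R : S → A → ℝ, ‖R - R₀‖_p ≤ α} = ρ^π_{R₀} - α * ‖d^π‖_q, and this infimum is attained. -/
open Finset

theorem stmt_2 {S A : Type*} [Fintype S] [Fintype A] [Nonempty S] [Nonempty A] [DecidableEq S]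
    (γ : ℝ) (hγ0 : 0 ≤ γ) (hγ1 : γ < 1)
    (P : S → A → S → ℝ) (hP : ∀ s a s', 0 ≤ P s a s')
    (hPsum : ∀ s a, ∑ s', P s a s' = 1)
    (μ : S → ℝ) (hμ : ∀ s, 0 < μ s) (hμsum : ∑ s, μ s = 1)
    (π : S → A → ℝ) (hπ : ∀ s a, 0 ≤ π s a) (hπsum : ∀ s, ∑ a, π s a = 1)
    (R₀ : S → A → ℝ) (α : ℝ) (hα : 0 < α)
    (p q : ℝ) (hp : 1 < p) (hq : q = p / (p - 1)) :
    IsLeast {r : ℝ | ∃ R : S → A → ℝ,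
        LpNorm p (fun s a => R s a - R₀ s a) ≤ α ∧ r = mdpReturn γ P μ π R}
      (mdpReturn γ P μ π R₀ - α * LpNorm q (dSA γ P μ π)) := by
  classical
  set d : S → A → ℝ := dSA γ P μ π with hd
  have hpq : p.HolderConjugate q := (Real.holderConjugate_iff_eq_conjExponent hp).mpr hq
  have hppos : 0 < p := hpq.pos
  have hqpos : 0 < q := hpq.symm.pos
  set Ssum : ℝ := ∑ s, ∑ a, |d s a| ^ q with hS
  have hSnn : 0 ≤ Ssum := Finset.sum_nonneg fun s _ => Finset.sum_nonneg fun a _ =>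
    Real.rpow_nonneg (abs_nonneg _) _
  have hNdef : LpNorm q d = Ssum ^ (1 / q) := rfl
  set N : ℝ := Ssum ^ (1 / q) with hN
  have hNnn : 0 ≤ N := Real.rpow_nonneg hSnn _
  -- splitting lemma for the return
  have hsplit : ∀ R : S → A → ℝ,
      mdpReturn γ P μ π R = mdpReturn γ P μ π R₀ + ∑ s, ∑ a, d s a * (R s a - R₀ s a) := by
    intro R
    simp only [mdpReturn, ← Finset.sum_add_distrib, ← hd]
    refine Finset.sum_congr rfl fun s _ => Finset.sum_congr rfl fun a _ => by ring
  -- Hölder lower bound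
  have key : ∀ R : S → A → ℝ, LpNorm p (fun s a => R s a - R₀ s a) ≤ α →
      mdpReturn γ P μ π R₀ - α * N ≤ mdpReturn γ P μ π R := by
    intro R hR
    have holder := Real.inner_le_Lp_mul_Lq (Finset.univ : Finset (S × A))
      (fun i : S × A => -(R i.1 i.2 - R₀ i.1 i.2)) (fun i : S × A => d i.1 i.2) hpq
    have e1 : ∑ i : S × A, -(R i.1 i.2 - R₀ i.1 i.2) * d i.1 i.2
        = -(∑ s, ∑ a, d s a * (R s a - R₀ s a)) := by
      rw [Fintype.sum_prod_type, ← Finset.sum_neg_distrib]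
      refine Finset.sum_congr rfl fun s _ => ?_
      rw [← Finset.sum_neg_distrib]
      exact Finset.sum_congr rfl fun a _ => by ring
    have e2 : (∑ i : S × A, |(-(R i.1 i.2 - R₀ i.1 i.2))| ^ p) ^ (1/p)
        = LpNorm p (fun s a => R s a - R₀ s a) := by
      rw [LpNorm, Fintype.sum_prod_type]
      simp [abs_neg, abs_sub_comm]
    have e3 : (∑ i : S × A, |d i.1 i.2| ^ q) ^ (1/q) = N := by
      rw [hN, hS, Fintype.sum_prod_type]
    rw [e1, e2, e3] at holder
    have : -(α * N) ≤ ∑ s, ∑ a, d s a * (R s a - R₀ s a) := by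
      have := mul_le_mul_of_nonneg_right hR hNnn
      nlinarith
    rw [hsplit R]; linarith
  constructor
  · -- membership: the infimum is attained
    rcases eq_or_lt_of_le hSnn with hS0 | hSpos
    · -- degenerate case Ssum = 0
      have hN0 : N = 0 := by rw [hN, ← hS0, Real.zero_rpow (by positivity)]
      refine ⟨R₀, ?_, ?_⟩
      · have : LpNorm p (fun s a => R₀ s a - R₀ s a) = 0 := by
          simp [LpNorm, Real.zero_rpow hppos.ne', one_div,
            Real.zero_rpow (inv_ne_zero hppos.ne')]
        linarith
      · rw [hNdef, hN0]; ring
    · have hNpos : 0 < N := Real.rpow_pos_of_pos hSpos _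
      have hNq : N ^ q = Ssum := by
        rw [hN, ← Real.rpow_mul hSnn, one_div_mul_cancel hqpos.ne', Real.rpow_one]
      set c : ℝ := α / N ^ (q - 1) with hc
      have hcpos : 0 < c := div_pos hα (Real.rpow_pos_of_pos hNpos _)
      set u : S → A → ℝ := fun s a => Real.sign (d s a) * |d s a| ^ (q - 1) with hu
      have hu_abs : ∀ s a, |u s a| = |d s a| ^ (q - 1) := by
        intro s a
        rcases lt_trichotomy (d s a) 0 with h | h | h
        · simp [hu, Real.sign_of_neg h, abs_mul,
            abs_of_nonneg (Real.rpow_nonneg (abs_nonneg _) _)]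
        · simp [hu, h, Real.zero_rpow hpq.symm.sub_one_ne_zero]
        · simp [hu, Real.sign_of_pos h, abs_mul,
            abs_of_nonneg (Real.rpow_nonneg (abs_nonneg _) _)]
      have hu_mul : ∀ s a, d s a * u s a = |d s a| ^ q := by
        intro s a
        have h1 : d s a * Real.sign (d s a) = |d s a| := by
          rcases lt_trichotomy (d s a) 0 with h | h | h
          · rw [Real.sign_of_neg h, abs_of_neg h]; ring
          · simp [h]
          · rw [Real.sign_of_pos h, abs_of_pos h]; ring
        have h2 : |d s a| ^ q = |d s a| ^ (1 : ℝ) * |d s a| ^ (q - 1) := by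
          rw [← Real.rpow_add' (abs_nonneg _) (by linarith : (1 : ℝ) + (q - 1) ≠ 0)]
          ring_nf
        rw [hu]
        calc d s a * (Real.sign (d s a) * |d s a| ^ (q - 1))
            = (d s a * Real.sign (d s a)) * |d s a| ^ (q - 1) := by ring
          _ = |d s a| ^ (1 : ℝ) * |d s a| ^ (q - 1) := by rw [h1, Real.rpow_one]
          _ = |d s a| ^ q := h2.symm
      set R1 : S → A → ℝ := fun s a => R₀ s a - c * u s a with hR1
      have hR1e : ∀ s a, R1 s a = R₀ s a - c * u s a := fun s a => rfl
      refine ⟨R1, ?_, ?_⟩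
      · -- norm equals α
        have habs : ∀ s a, |R1 s a - R₀ s a| ^ p = c ^ p * |d s a| ^ q := by
          intro s a
          have : R1 s a - R₀ s a = -(c * u s a) := by ring
          rw [this, abs_neg, abs_mul, abs_of_pos hcpos, hu_abs,
            Real.mul_rpow hcpos.le (Real.rpow_nonneg (abs_nonneg _) _),
            ← Real.rpow_mul (abs_nonneg _), hpq.symm.sub_one_mul_conj]
        have hcq : c ^ p * Ssum = α ^ p := by
          have hNq1 : (N ^ (q - 1) : ℝ) ^ p = N ^ q := by
            rw [← Real.rpow_mul hNnn, hpq.symm.sub_one_mul_conj]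
          rw [hc, Real.div_rpow hα.le (Real.rpow_nonneg hNnn _), hNq1, hNq,
            div_mul_cancel₀ _ hSpos.ne']
        have : LpNorm p (fun s a => R1 s a - R₀ s a) = α := by
          rw [LpNorm]
          have : ∑ s, ∑ a, |R1 s a - R₀ s a| ^ p = α ^ p := by
            simp only [habs, ← Finset.mul_sum, ← hS]
            exact hcq
          rw [this, ← Real.rpow_mul hα.le, mul_one_div_cancel hppos.ne', Real.rpow_one]
        linarith [this.le]
      · -- value equals mdpReturn R₀ - α * N
        rw [hsplit R1]
        have : ∑ s, ∑ a, d s a * (R1 s a - R₀ s a) = -(α * N) := by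
          have e : ∀ s a, d s a * (R1 s a - R₀ s a) = -c * (d s a * u s a) := by
            intro s a; rw [hR1e]; ring
          simp only [e, hu_mul, ← Finset.mul_sum, ← hS]
          have hsp : N ^ q = N ^ (q - 1) * N := by
            rw [show q = (q - 1) + 1 by ring, Real.rpow_add hNpos, Real.rpow_one]
            ring_nf
          have hNq1 : c * Ssum = α * N := by
            rw [hc, ← hNq, hsp]
            have hne : N ^ (q - 1) ≠ 0 := (Real.rpow_pos_of_pos hNpos _).ne'
            field_simp
          linarith [hNq1]
        rw [this, hNdef]; ring
  · -- lower bound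
    rintro r ⟨R, hR, rfl⟩
    rw [hNdef]
    exact key R hR
end

section
/- Fix a policy π, a nominal reward R₀ : S → A → ℝ, and α > 0. For the L_∞ reward uncertainty set {R : S → A → ℝ | ∀ s a, |R(s,a) - R₀(s,a)| ≤ α} (the case p = ∞, q = 1), the infimum of ρ^π_R over this set equals ρ^π_{R₀} - α * ∑_{s,a} d^π(s,a) = ρ^π_{R₀} - α/(1-γ), and it is attained at the uniformly penalized reward R(s,a) = R₀(s,a) - α. In particular ∑_{s,a} d^π(s,a) = 1/(1-γ). -/
open Finset

section aux
variable {S : Type*} [Fintype S] [DecidableEq S] [Nonempty S]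

theorem stoch_det_ne (γ : ℝ) (hγ0 : 0 ≤ γ) (hγ1 : γ < 1)
    (Q : Matrix S S ℝ) (hQ0 : ∀ s s', 0 ≤ Q s s') (hQ1 : ∀ s, ∑ s', Q s s' = 1) :
    ((1 : Matrix S S ℝ) - γ • Q).det ≠ 0 := by
  intro hdet
  obtain ⟨v, hv, hMv⟩ := (Matrix.exists_mulVec_eq_zero_iff).2 hdet
  obtain ⟨s, -, hs⟩ := Finset.exists_max_image (univ : Finset S) (fun s => |v s|) ⟨Classical.arbitrary S, mem_univ _⟩
  have hvs : |v s| ≠ 0 := by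
    intro h0
    apply hv
    funext t
    have := hs t (mem_univ t)
    have := abs_nonneg (v t)
    have : |v t| = 0 := le_antisymm (h0 ▸ hs t (mem_univ t)) (abs_nonneg _)
    simpa [abs_eq_zero] using this
  have hrow : v s = γ * ∑ t, Q s t * v t := by
    have := congrFun hMv s
    simp [Matrix.mulVec, dotProduct, Matrix.sub_apply, Matrix.one_apply,
      Matrix.smul_apply, sub_mul, Finset.sum_sub_distrib, Finset.mul_sum] at this
    have h2 : v s = ∑ x, γ * Q s x * v x := by linarith
    simpa [Finset.mul_sum, mul_assoc] using h2
  have hle : |v s| ≤ γ * |v s| := by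
    calc |v s| = γ * |∑ t, Q s t * v t| := by rw [hrow, abs_mul, abs_of_nonneg hγ0]
    _ ≤ γ * ∑ t, Q s t * |v s| := by
        apply mul_le_mul_of_nonneg_left _ hγ0
        calc |∑ t, Q s t * v t| ≤ ∑ t, |Q s t * v t| := Finset.abs_sum_le_sum_abs _ _
        _ ≤ ∑ t, Q s t * |v s| := by
            apply Finset.sum_le_sum
            intro t _
            rw [abs_mul, abs_of_nonneg (hQ0 s t)]
            exact mul_le_mul_of_nonneg_left (hs t (mem_univ t)) (hQ0 s t)
    _ = γ * |v s| := by rw [← Finset.sum_mul, hQ1 s, one_mul]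
  have hpos : 0 < |v s| := lt_of_le_of_ne (abs_nonneg _) (Ne.symm hvs)
  nlinarith

theorem stoch_inv_key (γ : ℝ) (hγ0 : 0 ≤ γ) (hγ1 : γ < 1)
    (Q : Matrix S S ℝ) (hQ0 : ∀ s s', 0 ≤ Q s s') (hQ1 : ∀ s, ∑ s', Q s s' = 1) :
    (∀ s s', 0 ≤ ((1 : Matrix S S ℝ) - γ • Q)⁻¹ s s') ∧
    (∀ s, ∑ s', ((1 : Matrix S S ℝ) - γ • Q)⁻¹ s s' = 1 / (1 - γ)) := by
  set M : Matrix S S ℝ := (1 : Matrix S S ℝ) - γ • Q with hM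
  set N : Matrix S S ℝ := M⁻¹ with hN
  have hdet : IsUnit M.det := isUnit_iff_ne_zero.2 (stoch_det_ne γ hγ0 hγ1 Q hQ0 hQ1)
  have hMN : M * N = 1 := Matrix.mul_nonsing_inv M hdet
  have hNM : N * M = 1 := Matrix.nonsing_inv_mul M hdet
  have hfix : ∀ s s', N s s' = (1 : Matrix S S ℝ) s s' + γ * ∑ t, Q s t * N t s' := by
    intro s s'
    have h := congrFun (congrFun hMN s) s'
    have hl : (M * N) s s' = N s s' - γ * ∑ t, Q s t * N t s' := by
      simp [Matrix.mul_apply, hM, Matrix.sub_apply, Matrix.one_apply, Matrix.smul_apply,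
        sub_mul, Finset.sum_sub_distrib, Finset.mul_sum, mul_assoc]
    rw [hl] at h
    linarith [h]
  have hnn : ∀ s s', 0 ≤ N s s' := by
    intro s s'
    obtain ⟨s₀, -, hs₀⟩ := Finset.exists_min_image (univ : Finset S) (fun t => N t s')
      ⟨Classical.arbitrary S, mem_univ _⟩
    have hmin : N s₀ s' ≥ γ * N s₀ s' := by
      calc N s₀ s' = (1 : Matrix S S ℝ) s₀ s' + γ * ∑ t, Q s₀ t * N t s' := hfix s₀ s'
      _ ≥ 0 + γ * ∑ t, Q s₀ t * N s₀ s' := by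
          gcongr with t _
          · simp [Matrix.one_apply]; positivity
          · exact hQ0 _ _
          · exact hs₀ t (mem_univ t)
      _ = γ * N s₀ s' := by rw [zero_add, ← Finset.sum_mul, hQ1, one_mul]
    have h0 : 0 ≤ N s₀ s' := by nlinarith
    exact le_trans h0 (hs₀ s (mem_univ s))
  refine ⟨hnn, ?_⟩
  intro s
  have h := congrArg (fun (X : Matrix S S ℝ) => ∑ s', X s s') hNM
  beta_reduce at h
  have hrow : ∀ t, ∑ s', M t s' = 1 - γ := by
    intro t
    simp [hM, Matrix.sub_apply, Matrix.one_apply, Matrix.smul_apply,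
      Finset.sum_sub_distrib, ← Finset.mul_sum, hQ1]
  have hl : ∑ s', (N * M) s s' = (∑ t, N s t) * (1 - γ) := by
    simp only [Matrix.mul_apply]
    rw [Finset.sum_comm]
    rw [Finset.sum_mul]
    refine Finset.sum_congr rfl fun t _ => ?_
    rw [← Finset.mul_sum, hrow]
  rw [hl] at h
  simp [Matrix.one_apply] at h
  have hγ : (1 : ℝ) - γ ≠ 0 := by linarith
  field_simp
  linarith [h]
end aux



theorem stmt_3 {S A : Type*} [Fintype S] [Fintype A] [Nonempty S] [Nonempty A] [DecidableEq S]
    (γ : ℝ) (hγ0 : 0 ≤ γ) (hγ1 : γ < 1)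
    (P : S → A → S → ℝ) (hP : ∀ s a s', 0 ≤ P s a s')
    (hPsum : ∀ s a, ∑ s', P s a s' = 1)
    (μ : S → ℝ) (hμ : ∀ s, 0 < μ s) (hμsum : ∑ s, μ s = 1)
    (π : S → A → ℝ) (hπ : ∀ s a, 0 ≤ π s a) (hπsum : ∀ s, ∑ a, π s a = 1)
    (R₀ : S → A → ℝ) (α : ℝ) (hα : 0 < α) :
    IsLeast {r : ℝ | ∃ R : S → A → ℝ,
        (∀ s a, |R s a - R₀ s a| ≤ α) ∧ r = mdpReturn γ P μ π R}
      (mdpReturn γ P μ π R₀ - α * ∑ s, ∑ a, dSA γ P μ π s a) ∧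
    (∑ s, ∑ a, dSA γ P μ π s a) = 1 / (1 - γ) ∧
    mdpReturn γ P μ π (fun s a => R₀ s a - α) =
      mdpReturn γ P μ π R₀ - α * ∑ s, ∑ a, dSA γ P μ π s a := by
  have hQ0 : ∀ s s', 0 ≤ Pmat P π s s' := fun s s' =>
    Finset.sum_nonneg fun a _ => mul_nonneg (hπ s a) (hP s a s')
  have hQ1 : ∀ s, ∑ s', Pmat P π s s' = 1 := by
    intro s
    unfold Pmat
    rw [Finset.sum_comm]
    simp [← Finset.mul_sum, hPsum, hπsum]
  obtain ⟨hnn, hrow⟩ := stoch_inv_key γ hγ0 hγ1 (Pmat P π) hQ0 hQ1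
  have hdnn : ∀ s, 0 ≤ dPi γ P μ π s := fun s' =>
    Finset.sum_nonneg fun s _ => mul_nonneg (hμ s).le (hnn s s')
  have hdsa : ∀ s a, 0 ≤ dSA γ P μ π s a := fun s a =>
    mul_nonneg (hdnn s) (hπ s a)
  have hD : (∑ s, ∑ a, dSA γ P μ π s a) = 1 / (1 - γ) := by
    have h1 : ∀ s, ∑ a, dSA γ P μ π s a = dPi γ P μ π s := by
      intro s; simp [dSA, ← Finset.mul_sum, hπsum]
    calc (∑ s, ∑ a, dSA γ P μ π s a) = ∑ s, dPi γ P μ π s :=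
          Finset.sum_congr rfl fun s _ => h1 s
    _ = ∑ s, μ s * ∑ s', (1 - γ • Pmat P π)⁻¹ s s' := by
          unfold dPi
          rw [Finset.sum_comm]
          simp [Finset.mul_sum]
    _ = 1 / (1 - γ) := by
          simp only [hrow]
          rw [← Finset.sum_mul, hμsum, one_mul]
  have hlin : ∀ R : S → A → ℝ, mdpReturn γ P μ π R - mdpReturn γ P μ π R₀ +
      α * ∑ s, ∑ a, dSA γ P μ π s a =
      ∑ s, ∑ a, dSA γ P μ π s a * (R s a - R₀ s a + α) := by
    intro R
    simp only [mdpReturn, mul_add, mul_sub, Finset.sum_add_distrib,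
      Finset.sum_sub_distrib, Finset.mul_sum]
    congr 1
    refine Finset.sum_congr rfl fun s _ => Finset.sum_congr rfl fun a _ => by ring
  have hval : mdpReturn γ P μ π (fun s a => R₀ s a - α) =
      mdpReturn γ P μ π R₀ - α * ∑ s, ∑ a, dSA γ P μ π s a := by
    have h := hlin (fun s a => R₀ s a - α)
    simp only [sub_sub_cancel_left] at h
    have h2 : ∑ s, ∑ a, dSA γ P μ π s a * (R₀ s a - α - R₀ s a + α) = 0 := by
      refine Finset.sum_eq_zero fun s _ => Finset.sum_eq_zero fun a _ => by ring
    have h3 := hlin (fun s a => R₀ s a - α)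
    rw [h2] at h3
    linarith
  refine ⟨⟨⟨fun s a => R₀ s a - α, fun s a => by
      simp [abs_of_nonpos, hα.le, abs_of_nonneg hα.le], hval.symm⟩, ?_⟩, hD, hval⟩
  rintro r ⟨R, hR, rfl⟩
  have hge : 0 ≤ ∑ s, ∑ a, dSA γ P μ π s a * (R s a - R₀ s a + α) := by
    refine Finset.sum_nonneg fun s _ => Finset.sum_nonneg fun a _ =>
      mul_nonneg (hdsa s a) ?_
    have := (abs_le.1 (hR s a)).1
    linarith
  rw [← hlin R] at hge
  linarith
end

section
/- Fix a policy π, a nominal reward R₀ : S → A → ℝ, and α > 0. Let M = max_{(s,a) ∈ S×A} d^π(s,a) and let X* = {(s,a) ∈ S×A | d^π(s,a) = M} (a nonempty finite set). For the L_1 reward uncertainty set {R : S → A → ℝ | ∑_{s,a} |R(s,a) - R₀(s,a)| ≤ α} (the case p = 1, q = ∞), the infimum of ρ^π_R over this set equals ρ^π_{R₀} - α * M, and it is attained at the one-hot-penalized reward R*(s,a) = R₀(s,a) - (α / |X*|) · 1{(s,a) ∈ X*}, which satisfies ∑_{s,a} |R*(s,a) - R₀(s,a)| = α. -/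
open Finset

lemma inv_entry_nonneg {S A : Type*} [Fintype S] [Fintype A] [Nonempty S]
    [DecidableEq S]
    (γ : ℝ) (hγ0 : 0 ≤ γ) (hγ1 : γ < 1)
    (P : S → A → S → ℝ) (hP : ∀ s a s', 0 ≤ P s a s')
    (hPsum : ∀ s a, ∑ s', P s a s' = 1)
    (π : S → A → ℝ) (hπ : ∀ s a, 0 ≤ π s a) (hπsum : ∀ s, ∑ a, π s a = 1)
    (s s' : S) : 0 ≤ (1 - γ • Pmat P π)⁻¹ s s' := by
  have hPm0 : ∀ s t : S, 0 ≤ Pmat P π s t := fun s t =>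
    Finset.sum_nonneg fun a _ => mul_nonneg (hπ s a) (hP s a t)
  have hPm1 : ∀ s : S, ∑ t, Pmat P π s t = 1 := by
    intro s
    rw [show (∑ t, Pmat P π s t) = ∑ a, ∑ t, π s a * P s a t from Finset.sum_comm]
    simp only [← Finset.mul_sum, hPsum, mul_one, hπsum]
  by_cases hu : IsUnit ((1 - γ • Pmat P π) : Matrix S S ℝ).det
  · have hmul := Matrix.mul_nonsing_inv (1 - γ • Pmat P π) hu
    set w : S → ℝ := fun t => (1 - γ • Pmat P π)⁻¹ t s' with hw
    have key : ∀ t : S, w t = (if t = s' then (1:ℝ) else 0) + γ * ∑ u, Pmat P π t u * w u := by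
      intro t
      have h := congrFun (congrFun hmul t) s'
      rw [Matrix.mul_apply] at h
      simp only [Matrix.sub_apply, Matrix.smul_apply, Matrix.one_apply, smul_eq_mul,
        sub_mul, Finset.sum_sub_distrib, ite_mul, one_mul, zero_mul] at h
      rw [Finset.sum_ite_eq Finset.univ t (fun x => (1 - γ • Pmat P π)⁻¹ x s')] at h
      simp only [Finset.mem_univ, if_true, mul_assoc, ← Finset.mul_sum] at h
      simp only [hw]
      linarith
    obtain ⟨t₀, -, ht₀⟩ := Finset.exists_min_image Finset.univ w Finset.univ_nonempty
    have hmin : ∀ t : S, w t₀ ≤ w t := fun t => ht₀ t (Finset.mem_univ t)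
    have h1 : ∑ u, Pmat P π t₀ u * w t₀ ≤ ∑ u, Pmat P π t₀ u * w u :=
      Finset.sum_le_sum fun u _ => mul_le_mul_of_nonneg_left (hmin u) (hPm0 t₀ u)
    have h2 : ∑ u, Pmat P π t₀ u * w t₀ = w t₀ := by
      rw [← Finset.sum_mul, hPm1, one_mul]
    have h3 := key t₀
    have h4 : (0:ℝ) ≤ if t₀ = s' then (1:ℝ) else 0 := by positivity
    have h5 : γ * w t₀ ≤ γ * ∑ u, Pmat P π t₀ u * w u := by
      calc γ * w t₀ = γ * ∑ u, Pmat P π t₀ u * w t₀ := by rw [h2]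
        _ ≤ _ := mul_le_mul_of_nonneg_left h1 hγ0
    have h6 : 0 ≤ w t₀ := by nlinarith
    exact le_trans h6 (hmin s)
  · rw [Matrix.nonsing_inv_apply_not_isUnit _ hu]
    simp


theorem stmt_4 {S A : Type*} [Fintype S] [Fintype A] [Nonempty S] [Nonempty A]
    [DecidableEq S] [DecidableEq A]
    (γ : ℝ) (hγ0 : 0 ≤ γ) (hγ1 : γ < 1)
    (P : S → A → S → ℝ) (hP : ∀ s a s', 0 ≤ P s a s')
    (hPsum : ∀ s a, ∑ s', P s a s' = 1)
    (μ : S → ℝ) (hμ : ∀ s, 0 < μ s) (hμsum : ∑ s, μ s = 1)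
    (π : S → A → ℝ) (hπ : ∀ s a, 0 ≤ π s a) (hπsum : ∀ s, ∑ a, π s a = 1)
    (R₀ : S → A → ℝ) (α : ℝ) (hα : 0 < α)
    (M : ℝ)
    (hM : M = Finset.univ.sup' Finset.univ_nonempty
      (fun sa : S × A => dSA γ P μ π sa.1 sa.2))
    (Xstar : Finset (S × A))
    (hXstar : ∀ sa : S × A, sa ∈ Xstar ↔ dSA γ P μ π sa.1 sa.2 = M)
    (Rstar : S → A → ℝ)
    (hRstar : ∀ s a, Rstar s a =
      R₀ s a - (if (s, a) ∈ Xstar then α / (Xstar.card : ℝ) else 0)) :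
    Xstar.Nonempty ∧
    IsLeast {r : ℝ | ∃ R : S → A → ℝ,
        (∑ s, ∑ a, |R s a - R₀ s a|) ≤ α ∧ r = mdpReturn γ P μ π R}
      (mdpReturn γ P μ π R₀ - α * M) ∧
    mdpReturn γ P μ π Rstar = mdpReturn γ P μ π R₀ - α * M ∧
    (∑ s, ∑ a, |Rstar s a - R₀ s a|) = α := by
  have hinv := inv_entry_nonneg γ hγ0 hγ1 P hP hPsum π hπ hπsum
  have hd0 : ∀ s a, 0 ≤ dSA γ P μ π s a := by
    intro s a
    exact mul_nonneg (Finset.sum_nonneg fun t _ => mul_nonneg (hμ t).le (hinv t s)) (hπ s a)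
  have hdM : ∀ s a, dSA γ P μ π s a ≤ M := by
    intro s a
    rw [hM]
    exact Finset.le_sup' (fun sa : S × A => dSA γ P μ π sa.1 sa.2) (Finset.mem_univ (s, a))
  obtain ⟨sa₀, -, hsa₀⟩ := Finset.exists_mem_eq_sup' (Finset.univ_nonempty)
      (fun sa : S × A => dSA γ P μ π sa.1 sa.2)
  have hne : Xstar.Nonempty := ⟨sa₀, (hXstar sa₀).2 (by rw [hM, hsa₀])⟩
  have hM0 : 0 ≤ M := le_trans (hd0 sa₀.1 sa₀.2) (hdM _ _)
  have hc : (0:ℝ) < (Xstar.card : ℝ) := by exact_mod_cast Finset.card_pos.2 hne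
  have part4 : (∑ s, ∑ a, |Rstar s a - R₀ s a|) = α := by
    have habs : ∀ s a, |Rstar s a - R₀ s a|
        = (if (s, a) ∈ Xstar then α / (Xstar.card : ℝ) else 0) := by
      intro s a
      rw [hRstar, show R₀ s a - (if (s, a) ∈ Xstar then α / (Xstar.card : ℝ) else 0) - R₀ s a
        = -(if (s, a) ∈ Xstar then α / (Xstar.card : ℝ) else 0) by ring, abs_neg, abs_of_nonneg]
      positivity
    simp only [habs]
    rw [show (∑ s : S, ∑ a : A, if (s, a) ∈ Xstar then α / (Xstar.card : ℝ) else 0)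
        = ∑ x : S × A, (if x ∈ Xstar then α / (Xstar.card : ℝ) else 0) from
      (Fintype.sum_prod_type (f := fun x : S × A =>
        if x ∈ Xstar then α / (Xstar.card : ℝ) else 0)).symm,
      Finset.sum_ite_mem, Finset.univ_inter, Finset.sum_const, nsmul_eq_mul]
    field_simp
  have part3 : mdpReturn γ P μ π Rstar = mdpReturn γ P μ π R₀ - α * M := by
    simp only [mdpReturn, hRstar, mul_sub, Finset.sum_sub_distrib]
    congr 1
    have hterm : ∀ s a, dSA γ P μ π s a * (if (s, a) ∈ Xstar then α / (Xstar.card : ℝ) else 0)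
        = (if (s, a) ∈ Xstar then M * (α / (Xstar.card : ℝ)) else 0) := by
      intro s a
      split_ifs with h
      · rw [(hXstar (s, a)).1 h]
      · ring
    simp only [hterm]
    rw [show (∑ s : S, ∑ a : A, if (s, a) ∈ Xstar then M * (α / (Xstar.card : ℝ)) else 0)
        = ∑ x : S × A, (if x ∈ Xstar then M * (α / (Xstar.card : ℝ)) else 0) from
      (Fintype.sum_prod_type (f := fun x : S × A =>
        if x ∈ Xstar then M * (α / (Xstar.card : ℝ)) else 0)).symm,
      Finset.sum_ite_mem, Finset.univ_inter, Finset.sum_const, nsmul_eq_mul]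
    rw [mul_left_comm, mul_div_assoc', mul_div_cancel_left₀ _ hc.ne']
    ring
  refine ⟨hne, ⟨⟨Rstar, part4.le, part3.symm⟩, ?_⟩, part3, part4⟩
  rintro r ⟨R, hR, rfl⟩
  have hsplit : mdpReturn γ P μ π R = mdpReturn γ P μ π R₀
      + ∑ s, ∑ a, dSA γ P μ π s a * (R s a - R₀ s a) := by
    simp only [mdpReturn, mul_sub, Finset.sum_sub_distrib]
    ring
  have hpt : ∀ s a, -(M * |R s a - R₀ s a|) ≤ dSA γ P μ π s a * (R s a - R₀ s a) := by
    intro s a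
    have h0 := hd0 s a
    have h1 := hdM s a
    have h2 := abs_nonneg (R s a - R₀ s a)
    have h3 := neg_abs_le (R s a - R₀ s a)
    nlinarith [mul_nonneg h0 (by linarith : (0:ℝ) ≤ R s a - R₀ s a + |R s a - R₀ s a|),
      mul_nonneg (by linarith : (0:ℝ) ≤ M - dSA γ P μ π s a) h2]
  have hsum1 : ∑ s, ∑ a, -(M * |R s a - R₀ s a|)
      ≤ ∑ s, ∑ a, dSA γ P μ π s a * (R s a - R₀ s a) :=
    Finset.sum_le_sum fun s _ => Finset.sum_le_sum fun a _ => hpt s a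
  have hsum2 : ∑ s, ∑ a, -(M * |R s a - R₀ s a|)
      = -(M * ∑ s, ∑ a, |R s a - R₀ s a|) := by
    simp [Finset.mul_sum]
  have hfin : -(M * α) ≤ -(M * ∑ s, ∑ a, |R s a - R₀ s a|) :=
    neg_le_neg (mul_le_mul_of_nonneg_left hR hM0)
  rw [hsum2] at hsum1
  rw [hsplit]
  linarith
end

section
/- Fix a policy π, a nominal reward R₀ : S → A → ℝ, α > 0, p ∈ (1,∞) with Hölder conjugate q = p/(p-1), and a weight function w : S → A → ℝ with w(s,a) > 0 for all (s,a). Define the weighted L_p norm ‖x‖_{w,p} = (∑_{s,a} w(s,a) * |x(s,a)|^p)^{1/p} and the reweighted occupation measure d̂(s,a) = d^π(s,a) / w(s,a)^{1/p}. Then the infimum of ρ^π_R over {R : S → A → ℝ | ‖R - R₀‖_{w,p} ≤ α} equals ρ^π_{R₀} - α * ‖d̂‖_q, and this infimum is attained. -/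
open Finset

/-- Hölder least-value lemma. -/
lemma hoelder_least {ι : Type*} [Fintype ι] {p q α : ℝ} (hpq : Real.HolderConjugate p q)
    (hα : 0 < α) (d : ι → ℝ) :
    IsLeast {r : ℝ | ∃ y : ι → ℝ, (∑ i, |y i| ^ p) ^ (1 / p) ≤ α ∧ r = ∑ i, d i * y i}
      (-(α * (∑ i, |d i| ^ q) ^ (1 / q))) := by
  have hp1 : 1 < p := Real.HolderTriple.lt hpq
  have hq1 : 1 < q := Real.HolderTriple.lt (Real.HolderConjugate.symm hpq)
  have hp0 : p ≠ 0 := by positivity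
  have hq0 : q ≠ 0 := by positivity
  have hqp : (q - 1) * p = q := by
    have h := Real.HolderConjugate.inv_add_inv_eq_one hpq
    field_simp at h
    nlinarith
  set Sv : ℝ := ∑ i, |d i| ^ q with hSv
  have hSnn : 0 ≤ Sv := Finset.sum_nonneg fun i _ => Real.rpow_nonneg (abs_nonneg _) _
  set N : ℝ := Sv ^ (1 / q) with hN
  have hNnn : 0 ≤ N := Real.rpow_nonneg hSnn _
  constructor
  · -- membership
    rcases eq_or_lt_of_le hSnn with hS0 | hSpos
    · -- all d i = 0
      have hd0 : ∀ i, d i = 0 := by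
        intro i
        have h := (Finset.sum_eq_zero_iff_of_nonneg
          (fun i _ => Real.rpow_nonneg (abs_nonneg (d i)) q)).mp hS0.symm i (Finset.mem_univ i)
        have := (Real.rpow_eq_zero (abs_nonneg _) hq0).mp h
        simpa using this
      refine ⟨0, ?_, ?_⟩
      · simp only [Pi.zero_apply, abs_zero, Real.zero_rpow hp0, Finset.sum_const_zero]
        rw [Real.zero_rpow (by positivity)]
        exact hα.le
      · have : N = 0 := by rw [hN, ← hS0, Real.zero_rpow (by positivity)]
        simp [this, hd0]
    · have hNpos : 0 < N := Real.rpow_pos_of_pos hSpos _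
      have hNq : N ^ q = Sv := by
        rw [hN, ← Real.rpow_mul hSnn]
        field_simp
        simp
      set c : ℝ := α / N ^ (q - 1) with hc
      have hcpos : 0 < c := div_pos hα (Real.rpow_pos_of_pos hNpos _)
      refine ⟨fun i => -(c * (Real.sign (d i) * |d i| ^ (q - 1))), ?_, ?_⟩
      · have habs : ∀ i, |(-(c * (Real.sign (d i) * |d i| ^ (q - 1))))| ^ p
            = c ^ p * |d i| ^ q := by
          intro i
          rcases eq_or_ne (d i) 0 with h0 | h0
          · simp [h0, Real.zero_rpow (sub_ne_zero.mpr hq1.ne'),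
              Real.zero_rpow hp0, Real.zero_rpow hq0]
          · have hs : |Real.sign (d i)| = 1 := by
              rcases lt_or_gt_of_ne h0 with h | h
              · rw [Real.sign_of_neg h]; norm_num
              · rw [Real.sign_of_pos h]; norm_num
            have habspos : (0:ℝ) < |d i| := abs_pos.mpr h0
            rw [abs_neg, abs_mul, abs_mul, hs, abs_of_pos hcpos,
              abs_of_nonneg (Real.rpow_nonneg (abs_nonneg _) _), one_mul,
              Real.mul_rpow hcpos.le (Real.rpow_nonneg (abs_nonneg _) _),
              ← Real.rpow_mul (abs_nonneg _), hqp]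
        simp only [habs, ← Finset.mul_sum, ← hSv]
        have hcp : c ^ p * Sv = α ^ p := by
          rw [hc, Real.div_rpow hα.le (Real.rpow_nonneg hNpos.le _),
            ← Real.rpow_mul hNpos.le, hqp, ← hNq]
          field_simp
        rw [hcp, ← Real.rpow_mul hα.le]
        field_simp
        simp
      · have hdy : ∀ i, d i * -(c * (Real.sign (d i) * |d i| ^ (q - 1)))
            = -(c * |d i| ^ q) := by
          intro i
          rcases eq_or_ne (d i) 0 with h0 | h0
          · simp [h0, Real.zero_rpow hq0]
          · have h1 : d i * Real.sign (d i) = |d i| := by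
              rcases lt_or_gt_of_ne h0 with h | h
              · rw [Real.sign_of_neg h, abs_of_neg h]; ring
              · rw [Real.sign_of_pos h, abs_of_pos h]; ring
            have habspos : (0:ℝ) < |d i| := abs_pos.mpr h0
            have h2 : |d i| * |d i| ^ (q - 1) = |d i| ^ q := by
              nth_rewrite 1 [← Real.rpow_one |d i|]
              rw [← Real.rpow_add habspos]
              ring_nf
            calc d i * -(c * (Real.sign (d i) * |d i| ^ (q - 1)))
                = -(c * ((d i * Real.sign (d i)) * |d i| ^ (q - 1))) := by ring
              _ = -(c * |d i| ^ q) := by rw [h1, h2]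
        simp only [hdy, Finset.sum_neg_distrib, ← Finset.mul_sum, ← hSv]
        rw [hc, ← hNq]
        rw [div_mul_eq_mul_div, mul_div_assoc, ← Real.rpow_sub hNpos]
        norm_num
  · -- lower bound
    rintro r ⟨y, hy, rfl⟩
    have h := Real.inner_le_Lp_mul_Lq (f := d) (g := fun i => -y i) Finset.univ hpq.symm
    simp only [abs_neg] at h
    have h2 : ∑ i, d i * -y i = -∑ i, d i * y i := by
      rw [← Finset.sum_neg_distrib]; congr 1; ext i; ring
    rw [h2] at h
    have h3 : N * (∑ i, |y i| ^ p) ^ (1 / p) ≤ N * α :=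
      mul_le_mul_of_nonneg_left hy hNnn
    have := h.trans h3
    linarith




open Finset

/-- weighted `L_p` norm `‖x‖_{w,p} = (∑_{s,a} w(s,a) |x(s,a)|^p)^{1/p}`. -/
noncomputable def WNorm {S A : Type*} [Fintype S] [Fintype A]
    (w : S → A → ℝ) (p : ℝ) (x : S → A → ℝ) : ℝ :=
  (∑ s, ∑ a, w s a * |x s a| ^ p) ^ (1 / p)

theorem stmt_5 {S A : Type*} [Fintype S] [Fintype A] [Nonempty S] [Nonempty A] [DecidableEq S]
    (γ : ℝ) (hγ0 : 0 ≤ γ) (hγ1 : γ < 1)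
    (P : S → A → S → ℝ) (hP : ∀ s a s', 0 ≤ P s a s')
    (hPsum : ∀ s a, ∑ s', P s a s' = 1)
    (μ : S → ℝ) (hμ : ∀ s, 0 < μ s) (hμsum : ∑ s, μ s = 1)
    (π : S → A → ℝ) (hπ : ∀ s a, 0 ≤ π s a) (hπsum : ∀ s, ∑ a, π s a = 1)
    (R₀ : S → A → ℝ) (α : ℝ) (hα : 0 < α)
    (p q : ℝ) (hp : 1 < p) (hq : q = p / (p - 1))
    (w : S → A → ℝ) (hw : ∀ s a, 0 < w s a)
    (dhat : S → A → ℝ)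
    (hdhat : ∀ s a, dhat s a = dSA γ P μ π s a / (w s a) ^ (1 / p)) :
    IsLeast {r : ℝ | ∃ R : S → A → ℝ,
        WNorm w p (fun s a => R s a - R₀ s a) ≤ α ∧ r = mdpReturn γ P μ π R}
      (mdpReturn γ P μ π R₀ - α * LpNorm q dhat) := by
  classical
  have hp0 : p ≠ 0 := by positivity
  have hpq : p.HolderConjugate q := (Real.holderConjugate_iff_eq_conjExponent hp).mpr hq
  set d : S × A → ℝ := fun i => dhat i.1 i.2 with hd
  have key := hoelder_least hpq hα d
  have hwp : ∀ s a, (0:ℝ) < (w s a) ^ (1/p) := fun s a => Real.rpow_pos_of_pos (hw s a) _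
  have hLp : LpNorm q dhat = (∑ i : S × A, |d i| ^ q) ^ (1 / q) := by
    rw [LpNorm]
    congr 1
    exact (Fintype.sum_prod_type (f := fun i : S × A => |d i| ^ q)).symm
  have main : ∀ R : S → A → ℝ,
      WNorm w p (fun s a => R s a - R₀ s a)
        = (∑ i : S × A, |(w i.1 i.2) ^ (1/p) * (R i.1 i.2 - R₀ i.1 i.2)| ^ p) ^ (1/p)
      ∧ mdpReturn γ P μ π R
        = mdpReturn γ P μ π R₀
          + ∑ i : S × A, d i * ((w i.1 i.2) ^ (1/p) * (R i.1 i.2 - R₀ i.1 i.2)) := by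
    intro R
    have hpt : ∀ s a, w s a * |R s a - R₀ s a| ^ p
        = |(w s a) ^ (1/p) * (R s a - R₀ s a)| ^ p := by
      intro s a
      rw [abs_mul, abs_of_pos (hwp s a),
        Real.mul_rpow (hwp s a).le (abs_nonneg _),
        ← Real.rpow_mul (hw s a).le, one_div, inv_mul_cancel₀ hp0, Real.rpow_one]
    constructor
    · rw [WNorm]
      congr 1
      rw [Fintype.sum_prod_type (f := fun i : S × A =>
        |(w i.1 i.2) ^ (1/p) * (R i.1 i.2 - R₀ i.1 i.2)| ^ p)]
      exact Finset.sum_congr rfl fun s _ => Finset.sum_congr rfl fun a _ => hpt s a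
    · have hpt2 : ∀ s a, d (s, a) * ((w s a) ^ (1/p) * (R s a - R₀ s a))
          = dSA γ P μ π s a * (R s a - R₀ s a) := by
        intro s a
        show dhat s a * _ = _
        rw [hdhat s a]
        have hne := (hwp s a).ne'
        field_simp
      have h3 : ∑ i : S × A, d i * ((w i.1 i.2) ^ (1/p) * (R i.1 i.2 - R₀ i.1 i.2))
          = ∑ s, ∑ a, dSA γ P μ π s a * (R s a - R₀ s a) := by
        rw [Fintype.sum_prod_type (f := fun i : S × A =>
          d i * ((w i.1 i.2) ^ (1/p) * (R i.1 i.2 - R₀ i.1 i.2)))]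
        exact Finset.sum_congr rfl fun s _ => Finset.sum_congr rfl fun a _ => hpt2 s a
      rw [h3, mdpReturn, mdpReturn, ← Finset.sum_add_distrib]
      refine Finset.sum_congr rfl fun s _ => ?_
      rw [← Finset.sum_add_distrib]
      exact Finset.sum_congr rfl fun a _ => by ring
  constructor
  · obtain ⟨y, hy, hval⟩ := key.1
    have hyy : ∀ i : S × A,
        (w i.1 i.2) ^ (1/p) * ((R₀ i.1 i.2 + y (i.1, i.2) / (w i.1 i.2) ^ (1/p))
          - R₀ i.1 i.2) = y i := by
      rintro ⟨s, a⟩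
      have hne := (hwp s a).ne'
      field_simp
      ring
    refine ⟨fun s a => R₀ s a + y (s, a) / (w s a) ^ (1/p), ?_, ?_⟩
    · rw [(main _).1]
      calc (∑ i : S × A, |(w i.1 i.2) ^ (1/p) *
              ((R₀ i.1 i.2 + y (i.1, i.2) / (w i.1 i.2) ^ (1/p)) - R₀ i.1 i.2)| ^ p) ^ (1/p)
          = (∑ i : S × A, |y i| ^ p) ^ (1/p) := by
            congr 1
            exact Finset.sum_congr rfl fun i _ => by rw [hyy i]
        _ ≤ α := hy
    · have h4 : mdpReturn γ P μ π (fun s a => R₀ s a + y (s, a) / (w s a) ^ (1/p))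
          = mdpReturn γ P μ π R₀ + ∑ i : S × A, d i * y i := by
        rw [(main (fun s a => R₀ s a + y (s, a) / (w s a) ^ (1/p))).2]
        congr 1
        exact Finset.sum_congr rfl fun i _ => by rw [hyy i]
      rw [h4, hLp, ← hval]
      ring
  · rintro r ⟨R, hR, rfl⟩
    set y : S × A → ℝ := fun i => (w i.1 i.2) ^ (1/p) * (R i.1 i.2 - R₀ i.1 i.2) with hy
    have hmem : ∑ i : S × A, d i * y i ∈ {r : ℝ | ∃ y : S × A → ℝ,
        (∑ i, |y i| ^ p) ^ (1 / p) ≤ α ∧ r = ∑ i, d i * y i} := by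
      refine ⟨y, ?_, rfl⟩
      rw [← (main R).1]
      exact hR
    have h1 := key.2 hmem
    rw [(main R).2, hLp]
    have h2 : ∑ i : S × A, d i * ((w i.1 i.2) ^ (1/p) * (R i.1 i.2 - R₀ i.1 i.2))
        = ∑ i : S × A, d i * y i := rfl
    rw [h2]
    linarith
end

section
/- Fix a policy π, a nominal reward R₀ : S → A → ℝ, α > 0, and p ∈ (1,∞) with Hölder conjugate q = p/(p-1). Let R*(s,a) = R₀(s,a) - α * (d^π(s,a)/‖d^π‖_q)^(q-1) be the worst-case reward, let v* : S → ℝ be its value function v* = (I - γ P^π)⁻¹ (R*)^π where (R*)^π(s) = ∑_a π s a * R*(s,a), and define the regularized Bellman operator T : (S → ℝ) → (S → ℝ) by (T v)(s) = ∑_a π s a * R₀(s,a) + γ * ∑_{s'} P^π(s,s') * v(s') - α * (∑_a π s a * d^π(s,a)^(q-1)) / ‖d^π‖_q^(q-1). Then T v* = v*, T is a γ-contraction in the sup norm (‖T v - T u‖_∞ ≤ γ ‖v - u‖_∞ for all v, u : S → ℝ), and consequently for any v₀ : S → ℝ the iterates v_{n+1} = T v_n satisfy max_s |v_n(s) - v*(s)|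 ≤ γ^n * max_s |v₀(s) - v*(s)| for all n. -/
open Finset

lemma pow_stoch {S : Type*} [Fintype S] [DecidableEq S] (Q : Matrix S S ℝ)
    (hQ0 : ∀ s s', 0 ≤ Q s s') (hQ1 : ∀ s, ∑ s', Q s s' = 1) (n : ℕ) :
    (∀ s s', 0 ≤ (Q ^ n) s s') ∧ (∀ s, ∑ s', (Q ^ n) s s' = 1) := by
  induction n with
  | zero =>
    constructor
    · intro s s'
      simp [Matrix.one_apply]
      positivity
    · intro s
      simp [Matrix.one_apply]
  | succ n ih =>
    constructor
    · intro s s'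
      rw [pow_succ, Matrix.mul_apply]
      exact Finset.sum_nonneg fun t _ => mul_nonneg (ih.1 s t) (hQ0 t s')
    · intro s
      simp only [pow_succ, Matrix.mul_apply]
      rw [Finset.sum_comm]
      simp only [← Finset.mul_sum, hQ1]
      simpa using ih.2 s

lemma neumann {S : Type*} [Fintype S] [DecidableEq S] (γ : ℝ) (hγ0 : 0 ≤ γ) (hγ1 : γ < 1)
    (Q : Matrix S S ℝ) (hQ0 : ∀ s s', 0 ≤ Q s s') (hQ1 : ∀ s, ∑ s', Q s s' = 1) :
    (∀ s s', 0 ≤ (1 - γ • Q)⁻¹ s s') ∧ (1 - γ • Q) * (1 - γ • Q)⁻¹ = 1 := by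
  classical
  set B : Matrix S S ℝ := Matrix.of fun s s' => ∑' n : ℕ, γ ^ n * (Q ^ n) s s' with hB
  have hterm : ∀ (s s' : S) (n : ℕ), 0 ≤ γ ^ n * (Q ^ n) s s' :=
    fun s s' n => mul_nonneg (pow_nonneg hγ0 n) ((pow_stoch Q hQ0 hQ1 n).1 s s')
  have hle1 : ∀ (s s' : S) (n : ℕ), (Q ^ n) s s' ≤ 1 := by
    intro s s' n
    have h := (pow_stoch Q hQ0 hQ1 n).2 s
    calc (Q ^ n) s s' ≤ ∑ t, (Q ^ n) s t :=
      Finset.single_le_sum (fun t _ => (pow_stoch Q hQ0 hQ1 n).1 s t) (Finset.mem_univ s')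
    _ = 1 := h
  have hsum : ∀ s s', Summable (fun n : ℕ => γ ^ n * (Q ^ n) s s') := by
    intro s s'
    apply Summable.of_nonneg_of_le (hterm s s') (fun n => ?_)
      (summable_geometric_of_lt_one hγ0 hγ1)
    calc γ ^ n * (Q ^ n) s s' ≤ γ ^ n * 1 :=
      mul_le_mul_of_nonneg_left (hle1 s s' n) (pow_nonneg hγ0 n)
    _ = γ ^ n := mul_one _
  have hmul : (1 - γ • Q) * B = 1 := by
    ext s s'
    rw [Matrix.sub_mul, Matrix.one_mul, Matrix.sub_apply, Matrix.smul_mul, Matrix.smul_apply,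
      Matrix.mul_apply]
    have h1 : ∑ t, Q s t * B t s' = ∑' n : ℕ, γ ^ n * (Q ^ (n + 1)) s s' := by
      have : ∀ t : S, Q s t * B t s' = ∑' n : ℕ, Q s t * (γ ^ n * (Q ^ n) t s') := by
        intro t; rw [hB]; simp only [Matrix.of_apply]; rw [tsum_mul_left]
      rw [Finset.sum_congr rfl fun t _ => this t]
      rw [← Summable.tsum_finsetSum (fun t _ => (hsum t s').mul_left (Q s t))]
      congr 1
      ext n
      rw [pow_succ', Matrix.mul_apply, Finset.mul_sum]
      congr 1
      ext t
      ring
    rw [h1, smul_eq_mul, ← tsum_mul_left]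
    have h2 : ∀ n : ℕ, γ * (γ ^ n * (Q ^ (n + 1)) s s') = γ ^ (n + 1) * (Q ^ (n + 1)) s s' := by
      intro n; ring
    rw [tsum_congr h2]
    have h3 := Summable.tsum_eq_zero_add (hsum s s')
    simp only [hB, Matrix.of_apply]
    rw [h3]
    simp [Matrix.one_apply]
  have hinv : (1 - γ • Q)⁻¹ = B := Matrix.inv_eq_right_inv hmul
  refine ⟨?_, ?_⟩
  · intro s s'
    rw [hinv]
    exact tsum_nonneg (hterm s s')
  · rw [hinv]; exact hmul

theorem stmt_10 {S A : Type*} [Fintype S] [Fintype A] [Nonempty S] [Nonempty A] [DecidableEq S]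
    (γ : ℝ) (hγ0 : 0 ≤ γ) (hγ1 : γ < 1)
    (P : S → A → S → ℝ) (hP : ∀ s a s', 0 ≤ P s a s')
    (hPsum : ∀ s a, ∑ s', P s a s' = 1)
    (μ : S → ℝ) (hμ : ∀ s, 0 < μ s) (hμsum : ∑ s, μ s = 1)
    (π : S → A → ℝ) (hπ : ∀ s a, 0 ≤ π s a) (hπsum : ∀ s, ∑ a, π s a = 1)
    (R₀ : S → A → ℝ) (α : ℝ) (hα : 0 < α)
    (p q : ℝ) (hp : 1 < p) (hq : q = p / (p - 1))
    (Rstar : S → A → ℝ)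
    (hRstar : ∀ s a, Rstar s a =
      R₀ s a - α * (dSA γ P μ π s a / LpNorm q (dSA γ P μ π)) ^ (q - 1))
    (vstar : S → ℝ)
    (hvstar : ∀ s, vstar s =
      ∑ s', (1 - γ • Pmat P π)⁻¹ s s' * ∑ a, π s' a * Rstar s' a)
    (T : (S → ℝ) → (S → ℝ))
    (hT : ∀ v s, T v s =
      (∑ a, π s a * R₀ s a) + γ * (∑ s', Pmat P π s s' * v s') -
        α * (∑ a, π s a * (dSA γ P μ π s a) ^ (q - 1)) /
          (LpNorm q (dSA γ P μ π)) ^ (q - 1)) :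
    T vstar = vstar ∧
    (∀ v u : S → ℝ,
      Finset.univ.sup' Finset.univ_nonempty (fun s => |T v s - T u s|) ≤
        γ * Finset.univ.sup' Finset.univ_nonempty (fun s => |v s - u s|)) ∧
    (∀ v₀ : S → ℝ, ∀ n : ℕ,
      Finset.univ.sup' Finset.univ_nonempty (fun s => |T^[n] v₀ s - vstar s|) ≤
        γ ^ n * Finset.univ.sup' Finset.univ_nonempty (fun s => |v₀ s - vstar s|)) := by
  classical
  set Q : Matrix S S ℝ := Pmat P π with hQdef
  have hQ0 : ∀ s s', 0 ≤ Q s s' := fun s s' =>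
    Finset.sum_nonneg fun a _ => mul_nonneg (hπ s a) (hP s a s')
  have hQ1 : ∀ s, ∑ s', Q s s' = 1 := by
    intro s
    rw [hQdef]
    unfold Pmat
    rw [Finset.sum_comm]
    simp only [← Finset.mul_sum, hPsum, mul_one]
    exact hπsum s
  obtain ⟨hM0, hMinv⟩ := neumann γ hγ0 hγ1 Q hQ0 hQ1
  set M : Matrix S S ℝ := (1 - γ • Q)⁻¹ with hMdef
  -- nonnegativity of occupation measures
  have hd0 : ∀ s a, 0 ≤ dSA γ P μ π s a := by
    intro s a
    unfold dSA dPi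
    refine mul_nonneg (Finset.sum_nonneg fun t _ => mul_nonneg (hμ t).le ?_) (hπ s a)
    exact hM0 t s
  have hN0 : 0 ≤ LpNorm q (dSA γ P μ π) := by
    unfold LpNorm
    apply Real.rpow_nonneg
    exact Finset.sum_nonneg fun s _ => Finset.sum_nonneg fun a _ =>
      Real.rpow_nonneg (abs_nonneg _) q
  -- the policy-averaged worst-case reward
  have hRsum : ∀ s, ∑ a, π s a * Rstar s a =
      (∑ a, π s a * R₀ s a) -
        α * (∑ a, π s a * (dSA γ P μ π s a) ^ (q - 1)) /
          (LpNorm q (dSA γ P μ π)) ^ (q - 1) := by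
    intro s
    have : ∀ a, π s a * Rstar s a =
        π s a * R₀ s a -
          α * (π s a * (dSA γ P μ π s a) ^ (q - 1)) /
            (LpNorm q (dSA γ P μ π)) ^ (q - 1) := by
      intro a
      rw [hRstar, Real.div_rpow (hd0 s a) hN0]
      ring
    rw [Finset.sum_congr rfl fun a _ => this a, Finset.sum_sub_distrib]
    congr 1
    rw [← Finset.sum_div, ← Finset.mul_sum]
  have hTr : ∀ v s, T v s = (∑ a, π s a * Rstar s a) + γ * ∑ s', Q s s' * v s' := by
    intro v s
    rw [hT, hRsum]
    ring
  -- fixed point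
  have hMrec : ∀ s s', M s s' = (1 : Matrix S S ℝ) s s' + γ * ∑ t, Q s t * M t s' := by
    intro s s'
    have := congrFun (congrFun hMinv s) s'
    rw [Matrix.sub_mul, Matrix.one_mul, Matrix.sub_apply, Matrix.smul_mul, Matrix.smul_apply,
      Matrix.mul_apply, smul_eq_mul] at this
    linarith [this]
  set r : S → ℝ := fun s => ∑ a, π s a * Rstar s a with hr
  have hvs : ∀ s, vstar s = ∑ s', M s s' * r s' := fun s => hvstar s
  have hfix : T vstar = vstar := by
    funext s
    rw [hTr, hvs]
    have key : γ * ∑ t, Q s t * vstar t = ∑ s', (M s s' - (1 : Matrix S S ℝ) s s') * r s' := by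
      have h1 : ∀ t, vstar t = ∑ s', M t s' * r s' := hvs
      calc γ * ∑ t, Q s t * vstar t
          = γ * ∑ t, Q s t * ∑ s', M t s' * r s' := by
            rw [Finset.sum_congr rfl fun t _ => by rw [h1 t]]
        _ = ∑ s', (γ * ∑ t, Q s t * M t s') * r s' := by
            simp only [Finset.mul_sum, Finset.sum_mul]
            rw [Finset.sum_comm]
            apply Finset.sum_congr rfl
            intro t _
            apply Finset.sum_congr rfl
            intro s' _
            ring
        _ = ∑ s', (M s s' - (1 : Matrix S S ℝ) s s') * r s' := by
            apply Finset.sum_congr rfl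
            intro s' _
            have h := hMrec s s'
            have : γ * ∑ t, Q s t * M t s' = M s s' - (1 : Matrix S S ℝ) s s' := by linarith
            rw [this]
    rw [key]
    have hdel : ∑ s', (1 : Matrix S S ℝ) s s' * r s' = r s := by
      simp [Matrix.one_apply]
    rw [Finset.sum_congr rfl fun s' _ => sub_mul (M s s') _ (r s'), Finset.sum_sub_distrib, hdel]
    ring
  -- contraction
  have hcontr : ∀ v u : S → ℝ,
      Finset.univ.sup' Finset.univ_nonempty (fun s => |T v s - T u s|) ≤
        γ * Finset.univ.sup' Finset.univ_nonempty (fun s => |v s - u s|) := by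
    intro v u
    set D := Finset.univ.sup' Finset.univ_nonempty (fun s => |v s - u s|) with hD
    apply Finset.sup'_le
    intro s _
    have hTd : T v s - T u s = γ * ∑ t, Q s t * (v t - u t) := by
      rw [hTr, hTr]
      have h : ∑ t, Q s t * (v t - u t) = (∑ t, Q s t * v t) - ∑ t, Q s t * u t := by
        rw [← Finset.sum_sub_distrib]
        apply Finset.sum_congr rfl
        intro t _
        ring
      rw [h]
      ring
    rw [hTd, abs_mul, abs_of_nonneg hγ0]
    apply mul_le_mul_of_nonneg_left _ hγ0
    calc |∑ t, Q s t * (v t - u t)| ≤ ∑ t, |Q s t * (v t - u t)| :=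
        Finset.abs_sum_le_sum_abs _ _
      _ = ∑ t, Q s t * |v t - u t| := by
          congr 1; ext t; rw [abs_mul, abs_of_nonneg (hQ0 s t)]
      _ ≤ ∑ t, Q s t * D := by
          apply Finset.sum_le_sum
          intro t _
          exact mul_le_mul_of_nonneg_left (Finset.le_sup' (fun s => |v s - u s|) (Finset.mem_univ t)) (hQ0 s t)
      _ = D := by rw [← Finset.sum_mul, hQ1, one_mul]
  refine ⟨hfix, hcontr, ?_⟩
  intro v₀ n
  induction n with
  | zero => simp
  | succ n ih =>
    rw [Function.iterate_succ_apply']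
    calc Finset.univ.sup' Finset.univ_nonempty (fun s => |T (T^[n] v₀) s - vstar s|)
        = Finset.univ.sup' Finset.univ_nonempty (fun s => |T (T^[n] v₀) s - T vstar s|) := by
          rw [hfix]
      _ ≤ γ * Finset.univ.sup' Finset.univ_nonempty (fun s => |T^[n] v₀ s - vstar s|) :=
          hcontr _ _
      _ ≤ γ * (γ ^ n * Finset.univ.sup' Finset.univ_nonempty (fun s => |v₀ s - vstar s|)) :=
          mul_le_mul_of_nonneg_left ih hγ0
      _ = γ ^ (n + 1) * Finset.univ.sup' Finset.univ_nonempty (fun s => |v₀ s - vstar s|) := by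
          ring
end

section
/- Let R : S → A → ℝ be a reward function with |R(s,a)| ≤ 1 for all (s,a). Then the return is Lipschitz in the policy with constant |A| / (1-γ)²: for all policies π and π', |ρ^{π'}_R - ρ^π_R| ≤ (|A| / (1-γ)²) * (∑_{s,a} (π'(s,a) - π(s,a))²)^{1/2}. -/
open Finset

open Matrix
section auxlem
variable {S : Type*} [Fintype S] [Nonempty S] [DecidableEq S]
set_option linter.unusedSectionVars false

lemma mulVec_one_sub_smul (γ : ℝ) (M : Matrix S S ℝ) (v : S → ℝ) (s : S) :
    ((1 - γ • M).mulVec v) s = v s - γ * ∑ s', M s s' * v s' := by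
  simp [Matrix.mulVec, dotProduct, Matrix.sub_apply, Matrix.smul_apply, sub_mul,
    Finset.sum_sub_distrib, Matrix.one_apply, ite_mul, Finset.mul_sum, mul_assoc]

lemma det_unit_aux (γ : ℝ) (hγ0 : 0 ≤ γ) (hγ1 : γ < 1) (Pm : Matrix S S ℝ)
    (hnn : ∀ s s', 0 ≤ Pm s s') (hrow : ∀ s, ∑ s', Pm s s' = 1) :
    IsUnit (1 - γ • Pm).det := by
  rw [isUnit_iff_ne_zero]
  intro hdet
  obtain ⟨v, hv0, hv⟩ := Matrix.exists_mulVec_eq_zero_iff.2 hdet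
  obtain ⟨s₀, -, hs₀⟩ := Finset.exists_max_image (univ : Finset S) (fun s => |v s|)
    univ_nonempty
  have key : v s₀ - γ * ∑ s', Pm s₀ s' * v s' = 0 := by
    rw [← mulVec_one_sub_smul γ Pm v s₀, hv]; rfl
  have hb : |v s₀| ≤ γ * |v s₀| := by
    have h1 : |v s₀| = γ * |∑ s', Pm s₀ s' * v s'| := by
      rw [sub_eq_zero] at key
      rw [key, abs_mul, abs_of_nonneg hγ0]
    have h2 : |∑ s', Pm s₀ s' * v s'| ≤ |v s₀| := by
      calc |∑ s', Pm s₀ s' * v s'| ≤ ∑ s', |Pm s₀ s' * v s'| := Finset.abs_sum_le_sum_abs _ _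
        _ ≤ ∑ s', Pm s₀ s' * |v s₀| := by
            refine Finset.sum_le_sum fun s' _ => ?_
            rw [abs_mul, abs_of_nonneg (hnn s₀ s')]
            exact mul_le_mul_of_nonneg_left (hs₀ s' (mem_univ _)) (hnn s₀ s')
        _ = |v s₀| := by rw [← Finset.sum_mul, hrow, one_mul]
    calc |v s₀| = γ * |∑ s', Pm s₀ s' * v s'| := h1
      _ ≤ γ * |v s₀| := mul_le_mul_of_nonneg_left h2 hγ0
  have hz : |v s₀| = 0 := by nlinarith [abs_nonneg (v s₀)]
  apply hv0
  funext s
  have := hs₀ s (mem_univ s)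
  rw [hz] at this
  exact abs_eq_zero.1 (le_antisymm this (abs_nonneg _))

lemma inv_entry_eq (γ : ℝ) (hγ0 : 0 ≤ γ) (hγ1 : γ < 1) (Pm : Matrix S S ℝ)
    (hnn : ∀ s s', 0 ≤ Pm s s') (hrow : ∀ s, ∑ s', Pm s s' = 1) (s s' : S) :
    (1 - γ • Pm)⁻¹ s s' = (1 : Matrix S S ℝ) s s' + γ * ∑ t, Pm s t * (1 - γ • Pm)⁻¹ t s' := by
  have hu := det_unit_aux γ hγ0 hγ1 Pm hnn hrow
  have h := congrFun (congrFun (Matrix.mul_nonsing_inv _ hu) s) s'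
  rw [Matrix.mul_apply] at h
  simp only [Matrix.sub_apply, Matrix.smul_apply, smul_eq_mul, sub_mul,
    Finset.sum_sub_distrib, Matrix.one_apply, ite_mul, one_mul, zero_mul,
    Finset.sum_ite_eq, mem_univ, if_true, mul_assoc, ← Finset.mul_sum] at h
  rw [Matrix.one_apply]
  linarith [h]

lemma inv_nonneg_aux (γ : ℝ) (hγ0 : 0 ≤ γ) (hγ1 : γ < 1) (Pm : Matrix S S ℝ)
    (hnn : ∀ s s', 0 ≤ Pm s s') (hrow : ∀ s, ∑ s', Pm s s' = 1) (s s' : S) :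
    0 ≤ (1 - γ • Pm)⁻¹ s s' := by
  set N := (1 - γ • Pm)⁻¹ with hN
  obtain ⟨p, -, hp⟩ := Finset.exists_min_image (univ : Finset (S × S))
    (fun p => N p.1 p.2) univ_nonempty
  have hc : γ * N p.1 p.2 ≤ N p.1 p.2 := by
    have h := inv_entry_eq γ hγ0 hγ1 Pm hnn hrow p.1 p.2
    have h1 : (0:ℝ) ≤ (1 : Matrix S S ℝ) p.1 p.2 := by
      rw [Matrix.one_apply]; positivity
    have h2 : N p.1 p.2 ≤ ∑ t, Pm p.1 t * N t p.2 := by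
      calc N p.1 p.2 = ∑ t, Pm p.1 t * N p.1 p.2 := by rw [← Finset.sum_mul, hrow, one_mul]
        _ ≤ ∑ t, Pm p.1 t * N t p.2 := by
            refine Finset.sum_le_sum fun t _ => ?_
            exact mul_le_mul_of_nonneg_left (hp (t, p.2) (mem_univ _)) (hnn p.1 t)
    nlinarith [mul_le_mul_of_nonneg_left h2 hγ0]
  have hc0 : 0 ≤ N p.1 p.2 := by nlinarith
  exact le_trans hc0 (hp (s, s') (mem_univ _))

lemma inv_rowsum_aux (γ : ℝ) (hγ0 : 0 ≤ γ) (hγ1 : γ < 1) (Pm : Matrix S S ℝ)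
    (hnn : ∀ s s', 0 ≤ Pm s s') (hrow : ∀ s, ∑ s', Pm s s' = 1) (s : S) :
    ∑ s', (1 - γ • Pm)⁻¹ s s' = 1 / (1 - γ) := by
  have hu := det_unit_aux γ hγ0 hγ1 Pm hnn hrow
  have h := congrFun (Matrix.nonsing_inv_mul _ hu) s
  have h2 : ∑ s'', (((1 - γ • Pm)⁻¹ * (1 - γ • Pm)) s s'') = ∑ s'', (1 : Matrix S S ℝ) s s'' := by
    rw [h]
  have hL : ∑ s'', (((1 - γ • Pm)⁻¹ * (1 - γ • Pm)) s s'')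
      = (1 - γ) * ∑ t, (1 - γ • Pm)⁻¹ s t := by
    simp only [Matrix.mul_apply]
    rw [Finset.sum_comm]
    rw [Finset.mul_sum]
    refine Finset.sum_congr rfl fun t _ => ?_
    rw [← Finset.mul_sum]
    have : ∑ s'', (1 - γ • Pm) t s'' = 1 - γ := by
      simp only [Matrix.sub_apply, Matrix.smul_apply, smul_eq_mul,
        Finset.sum_sub_distrib, Matrix.one_apply, Finset.sum_ite_eq, mem_univ, if_true,
        ← Finset.mul_sum, hrow]
      ring
    rw [this]; ring
  have hR : ∑ s'', (1 : Matrix S S ℝ) s s'' = 1 := by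
    simp [Matrix.one_apply]
  rw [hL, hR] at h2
  rw [eq_div_iff (by linarith : (1:ℝ) - γ ≠ 0)]
  linear_combination h2

end auxlem

theorem stmt_14 {S A : Type*} [Fintype S] [Fintype A] [Nonempty S] [Nonempty A] [DecidableEq S]
    (γ : ℝ) (hγ0 : 0 ≤ γ) (hγ1 : γ < 1)
    (P : S → A → S → ℝ) (hP : ∀ s a s', 0 ≤ P s a s')
    (hPsum : ∀ s a, ∑ s', P s a s' = 1)
    (μ : S → ℝ) (hμ : ∀ s, 0 < μ s) (hμsum : ∑ s, μ s = 1)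
    (R : S → A → ℝ) (hR : ∀ s a, |R s a| ≤ 1)
    (π : S → A → ℝ) (hπ : ∀ s a, 0 ≤ π s a) (hπsum : ∀ s, ∑ a, π s a = 1)
    (π' : S → A → ℝ) (hπ' : ∀ s a, 0 ≤ π' s a) (hπ'sum : ∀ s, ∑ a, π' s a = 1) :
    |mdpReturn γ P μ π' R - mdpReturn γ P μ π R| ≤
      ((Fintype.card A : ℝ) / (1 - γ) ^ 2) *
        (∑ s, ∑ a, (π' s a - π s a) ^ 2) ^ ((1 : ℝ) / 2) := by
  have hγ1' : (0:ℝ) < 1 - γ := by linarith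
  -- Pmat properties
  have hPm_nn : ∀ (σ : S → A → ℝ), (∀ s a, 0 ≤ σ s a) → ∀ s s', 0 ≤ Pmat P σ s s' :=
    fun σ hσ s s' => Finset.sum_nonneg fun a _ => mul_nonneg (hσ s a) (hP s a s')
  have hPm_row : ∀ (σ : S → A → ℝ), (∀ s, ∑ a, σ s a = 1) → ∀ s, ∑ s', Pmat P σ s s' = 1 := by
    intro σ hσ s
    simp only [Pmat]
    rw [Finset.sum_comm]
    simp only [← Finset.mul_sum, hPsum, mul_one]
    exact hσ s
  set Pm := Pmat P π with hPmdef
  set Pm' := Pmat P π' with hPm'def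
  have hnn := hPm_nn π hπ
  have hrow := hPm_row π hπsum
  have hnn' := hPm_nn π' hπ'
  have hrow' := hPm_row π' hπ'sum
  have hu := det_unit_aux γ hγ0 hγ1 Pm hnn hrow
  have hu' := det_unit_aux γ hγ0 hγ1 Pm' hnn' hrow'
  set N := (1 - γ • Pm)⁻¹ with hNdef
  set N' := (1 - γ • Pm')⁻¹ with hN'def
  have hNnn := inv_nonneg_aux γ hγ0 hγ1 Pm hnn hrow
  have hN'nn := inv_nonneg_aux γ hγ0 hγ1 Pm' hnn' hrow'
  have hNrow := inv_rowsum_aux γ hγ0 hγ1 Pm hnn hrow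
  have hN'row := inv_rowsum_aux γ hγ0 hγ1 Pm' hnn' hrow'
  -- reward vectors
  set rπ : S → ℝ := fun s => ∑ a, π s a * R s a with hrπdef
  set rπ' : S → ℝ := fun s => ∑ a, π' s a * R s a with hrπ'def
  have habs_r : ∀ (σ : S → A → ℝ), (∀ s a, 0 ≤ σ s a) → (∀ s, ∑ a, σ s a = 1) →
      ∀ s, |∑ a, σ s a * R s a| ≤ 1 := by
    intro σ h0 h1 s
    calc |∑ a, σ s a * R s a| ≤ ∑ a, |σ s a * R s a| := Finset.abs_sum_le_sum_abs _ _
      _ ≤ ∑ a, σ s a := by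
          refine Finset.sum_le_sum fun a _ => ?_
          rw [abs_mul, abs_of_nonneg (h0 s a)]
          calc σ s a * |R s a| ≤ σ s a * 1 := mul_le_mul_of_nonneg_left (hR s a) (h0 s a)
            _ = σ s a := mul_one _
      _ = 1 := h1 s
  have hrabs : ∀ s, |rπ s| ≤ 1 := habs_r π hπ hπsum
  -- occupation measure of π'
  set d' : S → ℝ := Matrix.vecMul μ N' with hd'def
  have hd'eq : dPi γ P μ π' = d' := by
    funext s'
    simp [dPi, hd'def, Matrix.vecMul, dotProduct, hN'def, hPm'def]
  have hdeq : dPi γ P μ π = Matrix.vecMul μ N := by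
    funext s'
    simp [dPi, Matrix.vecMul, dotProduct, hNdef, hPmdef]
  have hd'nn : ∀ s, 0 ≤ d' s := by
    intro s
    exact Finset.sum_nonneg fun t _ => mul_nonneg (hμ t).le (hN'nn t s)
  have hd'sum : ∑ s, d' s = 1 / (1 - γ) := by
    rw [hd'def]
    simp only [Matrix.vecMul, dotProduct]
    rw [Finset.sum_comm]
    simp only [← Finset.mul_sum]
    simp only [show ∀ x, ∑ i, N' x i = 1 / (1 - γ) from hN'row]
    rw [← Finset.sum_mul, hμsum, one_mul]
  -- returns as dot products
  have hret : ∀ (σ : S → A → ℝ),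
      mdpReturn γ P μ σ R = ∑ s, dPi γ P μ σ s * ∑ a, σ s a * R s a := by
    intro σ
    simp only [mdpReturn, dSA, Finset.mul_sum, mul_assoc]
  -- matrix resolvent identity
  have hDiff : N' - N = γ • (N' * (Pm' - Pm) * N) := by
    have e1 : (1 - γ • Pm) - (1 - γ • Pm') = γ • (Pm' - Pm) := by
      rw [smul_sub]; abel
    have e2 : N' * ((1 - γ • Pm) - (1 - γ • Pm')) * N = N' - N := by
      calc N' * ((1 - γ • Pm) - (1 - γ • Pm')) * N
          = N' * ((1 - γ • Pm) * N) - (N' * (1 - γ • Pm')) * N := by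
            rw [Matrix.mul_sub, Matrix.sub_mul, Matrix.mul_assoc]
        _ = N' * 1 - 1 * N := by
            rw [hNdef, Matrix.mul_nonsing_inv _ hu, hN'def, Matrix.nonsing_inv_mul _ hu']
        _ = N' - N := by rw [Matrix.mul_one, Matrix.one_mul]
    rw [← e2, e1, Matrix.mul_smul, Matrix.smul_mul]
  -- key decomposition
  set w : S → ℝ := N.mulVec rπ with hwdef
  have key : mdpReturn γ P μ π' R - mdpReturn γ P μ π R
      = (∑ s, d' s * (rπ' s - rπ s)) + γ * ∑ s, d' s * ((Pm' - Pm).mulVec w) s := by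
    rw [hret π', hret π, hd'eq, hdeq]
    have h1 : ∑ s, d' s * (rπ' s - rπ s)
        = dotProduct d' rπ' - dotProduct d' rπ := by
      simp [dotProduct, mul_sub, Finset.sum_sub_distrib]
    have h2 : ∑ s, d' s * ((Pm' - Pm).mulVec w) s
        = dotProduct d' ((Pm' - Pm).mulVec w) := rfl
    have h3 : dotProduct d' ((Pm' - Pm).mulVec w)
        = dotProduct (Matrix.vecMul μ (N' * (Pm' - Pm) * N)) rπ := by
      rw [hwdef, Matrix.mulVec_mulVec, dotProduct_mulVec, hd'def,
        Matrix.vecMul_vecMul, ← Matrix.mul_assoc]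
    have h4 : dotProduct (Matrix.vecMul μ N) rπ + γ * dotProduct (Matrix.vecMul μ (N' * (Pm' - Pm) * N)) rπ
        = dotProduct d' rπ := by
      have hsm : Matrix.vecMul μ (γ • (N' * (Pm' - Pm) * N))
          = γ • (Matrix.vecMul μ (N' * (Pm' - Pm) * N)) := by
        funext j
        simp [Matrix.vecMul, dotProduct, Matrix.smul_apply, Finset.mul_sum,
          mul_left_comm]
      have : dotProduct (Matrix.vecMul μ (N' - N)) rπ
          = γ * dotProduct (Matrix.vecMul μ (N' * (Pm' - Pm) * N)) rπ := by
        rw [hDiff, hsm, smul_dotProduct, smul_eq_mul]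
      rw [← this, hd'def]
      simp [Matrix.vecMul_sub, sub_dotProduct]
    have h5 : ∑ s, Matrix.vecMul μ N' s * rπ' s = dotProduct d' rπ' := rfl
    have h6 : ∑ s, Matrix.vecMul μ N s * rπ s = dotProduct (Matrix.vecMul μ N) rπ := rfl
    rw [h5, h6, h1, h2, h3]
    linarith [h4]
  -- bounds
  set e : S → ℝ := fun s => ∑ a, |π' s a - π s a| with hedef
  have he_nn : ∀ s, 0 ≤ e s := fun s => Finset.sum_nonneg fun a _ => abs_nonneg _
  have hb1 : ∀ s, |rπ' s - rπ s| ≤ e s := by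
    intro s
    have hh : rπ' s - rπ s = ∑ a, (π' s a - π s a) * R s a := by
      simp [hrπdef, hrπ'def, sub_mul, Finset.sum_sub_distrib]
    rw [hh]
    calc |∑ a, (π' s a - π s a) * R s a| ≤ ∑ a, |(π' s a - π s a) * R s a| :=
        Finset.abs_sum_le_sum_abs _ _
      _ ≤ e s := by
          refine Finset.sum_le_sum fun a _ => ?_
          rw [abs_mul]
          calc |π' s a - π s a| * |R s a| ≤ |π' s a - π s a| * 1 :=
              mul_le_mul_of_nonneg_left (hR s a) (abs_nonneg _)
            _ = |π' s a - π s a| := mul_one _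
  have hw : ∀ s, |w s| ≤ 1 / (1 - γ) := by
    intro s
    have hh : w s = ∑ s', N s s' * rπ s' := rfl
    rw [hh]
    calc |∑ s', N s s' * rπ s'| ≤ ∑ s', |N s s' * rπ s'| := Finset.abs_sum_le_sum_abs _ _
      _ ≤ ∑ s', N s s' := by
          refine Finset.sum_le_sum fun s' _ => ?_
          rw [abs_mul, abs_of_nonneg (hNnn s s')]
          calc N s s' * |rπ s'| ≤ N s s' * 1 :=
              mul_le_mul_of_nonneg_left (hrabs s') (hNnn s s')
            _ = N s s' := mul_one _
      _ = 1 / (1 - γ) := hNrow s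
  have hb2 : ∀ s, |((Pm' - Pm).mulVec w) s| ≤ e s * (1 / (1 - γ)) := by
    intro s
    have hds : ∀ s', |Pm' s s' - Pm s s'| ≤ ∑ a, |π' s a - π s a| * P s a s' := by
      intro s'
      have hh : Pm' s s' - Pm s s' = ∑ a, (π' s a - π s a) * P s a s' := by
        simp [hPm'def, hPmdef, Pmat, sub_mul, Finset.sum_sub_distrib]
      rw [hh]
      calc |∑ a, (π' s a - π s a) * P s a s'| ≤ ∑ a, |(π' s a - π s a) * P s a s'| :=
          Finset.abs_sum_le_sum_abs _ _
        _ = ∑ a, |π' s a - π s a| * P s a s' := by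
            refine Finset.sum_congr rfl fun a _ => ?_
            rw [abs_mul, abs_of_nonneg (hP s a s')]
    have hmv : ((Pm' - Pm).mulVec w) s = ∑ s', (Pm' s s' - Pm s s') * w s' := by
      simp [Matrix.mulVec, dotProduct, Matrix.sub_apply]
    rw [hmv]
    calc |∑ s', (Pm' s s' - Pm s s') * w s'| ≤ ∑ s', |Pm' s s' - Pm s s'| * |w s'| := by
          refine le_trans (Finset.abs_sum_le_sum_abs _ _) ?_
          refine Finset.sum_le_sum fun s' _ => ?_
          rw [abs_mul]
      _ ≤ ∑ s', (∑ a, |π' s a - π s a| * P s a s') * (1 / (1 - γ)) := by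
          refine Finset.sum_le_sum fun s' _ => ?_
          exact mul_le_mul (hds s') (hw s') (abs_nonneg _)
            (Finset.sum_nonneg fun a _ => mul_nonneg (abs_nonneg _) (hP _ _ _))
      _ = e s * (1 / (1 - γ)) := by
          rw [← Finset.sum_mul]
          congr 1
          rw [Finset.sum_comm]
          simp only [← Finset.mul_sum, hPsum, mul_one]
          rfl
  -- Cauchy-Schwarz
  set T := (∑ s, ∑ a, (π' s a - π s a) ^ 2) ^ ((1:ℝ)/2) with hTdef
  have hsq_nn : (0:ℝ) ≤ ∑ s, ∑ a, (π' s a - π s a)^2 :=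
    Finset.sum_nonneg fun s _ => Finset.sum_nonneg fun a _ => sq_nonneg _
  have hT : T = Real.sqrt (∑ s, ∑ a, (π' s a - π s a)^2) := by
    rw [hTdef, Real.sqrt_eq_rpow]
  have hTnn : 0 ≤ T := by rw [hT]; exact Real.sqrt_nonneg _
  have hcA : (0:ℝ) ≤ (Fintype.card A : ℝ) := by positivity
  have heT : ∀ s, e s ≤ Real.sqrt (Fintype.card A) * T := by
    intro s
    have hcs : (e s)^2 ≤ (∑ a, (π' s a - π s a)^2) * (Fintype.card A) := by
      have h := Finset.sum_mul_sq_le_sq_mul_sq (univ : Finset A)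
        (fun a => |π' s a - π s a|) (fun _ => (1:ℝ))
      simpa [hedef, sq_abs, Finset.card_univ] using h
    have h5 : (∑ a, (π' s a - π s a)^2) ≤ ∑ s, ∑ a, (π' s a - π s a)^2 :=
      Finset.single_le_sum (f := fun s => ∑ a, (π' s a - π s a)^2)
        (fun t _ => Finset.sum_nonneg fun a _ => sq_nonneg _) (mem_univ s)
    have hcs2 : (e s)^2 ≤ (∑ s, ∑ a, (π' s a - π s a)^2) * (Fintype.card A) :=
      le_trans hcs (mul_le_mul_of_nonneg_right h5 hcA)
    have := Real.sqrt_le_sqrt hcs2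
    rw [Real.sqrt_sq (he_nn s), Real.sqrt_mul hsq_nn, ← hT] at this
    calc e s ≤ T * Real.sqrt (Fintype.card A) := this
      _ = Real.sqrt (Fintype.card A) * T := mul_comm _ _
  -- final assembly
  set B := ∑ s, d' s * e s with hBdef
  have hBnn : 0 ≤ B := Finset.sum_nonneg fun s _ => mul_nonneg (hd'nn s) (he_nn s)
  have main1 : |mdpReturn γ P μ π' R - mdpReturn γ P μ π R| ≤ B * (1 / (1 - γ)) := by
    rw [key]
    have t1 : |∑ s, d' s * (rπ' s - rπ s)| ≤ B := by
      calc |∑ s, d' s * (rπ' s - rπ s)| ≤ ∑ s, |d' s * (rπ' s - rπ s)| :=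
          Finset.abs_sum_le_sum_abs _ _
        _ ≤ B := by
            refine Finset.sum_le_sum fun s _ => ?_
            rw [abs_mul, abs_of_nonneg (hd'nn s)]
            exact mul_le_mul_of_nonneg_left (hb1 s) (hd'nn s)
    have t2 : |∑ s, d' s * ((Pm' - Pm).mulVec w) s| ≤ B * (1 / (1 - γ)) := by
      calc |∑ s, d' s * ((Pm' - Pm).mulVec w) s|
          ≤ ∑ s, |d' s * ((Pm' - Pm).mulVec w) s| := Finset.abs_sum_le_sum_abs _ _
        _ ≤ ∑ s, d' s * (e s * (1 / (1 - γ))) := by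
            refine Finset.sum_le_sum fun s _ => ?_
            rw [abs_mul, abs_of_nonneg (hd'nn s)]
            exact mul_le_mul_of_nonneg_left (hb2 s) (hd'nn s)
        _ = B * (1 / (1 - γ)) := by
            rw [hBdef, Finset.sum_mul]
            exact Finset.sum_congr rfl fun s _ => (mul_assoc _ _ _).symm
    calc |(∑ s, d' s * (rπ' s - rπ s)) + γ * ∑ s, d' s * ((Pm' - Pm).mulVec w) s|
        ≤ |∑ s, d' s * (rπ' s - rπ s)| + |γ * ∑ s, d' s * ((Pm' - Pm).mulVec w) s| :=
          abs_add_le _ _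
      _ ≤ B + γ * (B * (1 / (1 - γ))) := by
          rw [abs_mul, abs_of_nonneg hγ0]
          exact add_le_add t1 (mul_le_mul_of_nonneg_left t2 hγ0)
      _ = B * (1 / (1 - γ)) := by field_simp; ring
  have main2 : B ≤ (1 / (1 - γ)) * (Real.sqrt (Fintype.card A) * T) := by
    calc B ≤ ∑ s, d' s * (Real.sqrt (Fintype.card A) * T) := by
          refine Finset.sum_le_sum fun s _ => ?_
          exact mul_le_mul_of_nonneg_left (heT s) (hd'nn s)
      _ = (1 / (1 - γ)) * (Real.sqrt (Fintype.card A) * T) := by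
          rw [← Finset.sum_mul, hd'sum]
  have hsqle : Real.sqrt (Fintype.card A) ≤ (Fintype.card A : ℝ) := by
    have h1A : (1:ℝ) ≤ (Fintype.card A : ℝ) := by
      exact_mod_cast Fintype.card_pos
    nlinarith [Real.sq_sqrt hcA, Real.sqrt_nonneg ((Fintype.card A : ℝ)),
      sq_nonneg (Real.sqrt ((Fintype.card A : ℝ)) - 1)]
  calc |mdpReturn γ P μ π' R - mdpReturn γ P μ π R| ≤ B * (1 / (1 - γ)) := main1
    _ ≤ ((1 / (1 - γ)) * (Real.sqrt (Fintype.card A) * T)) * (1 / (1 - γ)) :=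
        mul_le_mul_of_nonneg_right main2 (by positivity)
    _ = (Real.sqrt (Fintype.card A) / (1 - γ)^2) * T := by
        have hne : ((1:ℝ) - γ) ≠ 0 := by positivity
        field_simp
    _ ≤ ((Fintype.card A : ℝ) / (1 - γ)^2) * T := by
        refine mul_le_mul_of_nonneg_right ?_ hTnn
        gcongr
    _ = ((Fintype.card A : ℝ) / (1 - γ)^2) * (∑ s, ∑ a, (π' s a - π s a) ^ 2) ^ ((1:ℝ)/2) := by
        rw [hTdef]
end

section
/- For every state-action pair (s,a), the state-action occupation measure is Lipschitz in the policy with constant |A| / (1-γ)²: for all policies π and π', |d^{π'}(s,a) - d^π(s,a)| ≤ (|A| / (1-γ)²) * (∑_{s',a'} (π'(s',a') - π(s',a'))²)^{1/2}. -/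
open Finset

section Aux

open Filter Matrix

set_option maxHeartbeats 1000000

variable {S : Type*} [Fintype S] [DecidableEq S]

lemma inv_props (γ : ℝ) (hγ0 : 0 ≤ γ) (hγ1 : γ < 1) (K : Matrix S S ℝ)
    (hK0 : ∀ s s', 0 ≤ K s s') (hK1 : ∀ s, ∑ s', K s s' = 1) :
    ((1 - γ • K) * (1 - γ • K)⁻¹ = 1) ∧ ((1 - γ • K)⁻¹ * (1 - γ • K) = 1) ∧
    (∀ s s', 0 ≤ (1 - γ • K)⁻¹ s s') ∧ (∀ s, ∑ s', (1 - γ • K)⁻¹ s s' = (1 - γ)⁻¹) := by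
  have hγne : (1 : ℝ) - γ ≠ 0 := by linarith
  -- kernel is trivial
  have hker : ∀ v : S → ℝ, (1 - γ • K) *ᵥ v = 0 → v = 0 := by
    intro v hv
    have hv' : v = γ • (K *ᵥ v) := by
      have : (1 - γ • K) *ᵥ v = v - γ • (K *ᵥ v) := by
        rw [Matrix.sub_mulVec, Matrix.one_mulVec, Matrix.smul_mulVec]
      rw [this] at hv
      have := sub_eq_zero.mp hv
      exact this
    rcases isEmpty_or_nonempty S with hS | hS
    · funext s; exact absurd (Fintype.card_pos_iff.mpr ⟨s⟩).ne'
        (by simp [Fintype.card_eq_zero])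
    obtain ⟨s₀, -, hmax⟩ := Finset.exists_max_image Finset.univ (fun s => |v s|)
      Finset.univ_nonempty
    have key : |v s₀| ≤ γ * |v s₀| := by
      have h1 : v s₀ = γ * ∑ t, K s₀ t * v t := by
        have := congrFun hv' s₀
        simpa [Matrix.mulVec, dotProduct] using this
      calc |v s₀| = γ * |∑ t, K s₀ t * v t| := by
            rw [h1, abs_mul, abs_of_nonneg hγ0]
        _ ≤ γ * ∑ t, K s₀ t * |v t| := by
            apply mul_le_mul_of_nonneg_left _ hγ0
            refine (Finset.abs_sum_le_sum_abs _ _).trans (le_of_eq ?_)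
            refine Finset.sum_congr rfl fun t _ => ?_
            rw [abs_mul, abs_of_nonneg (hK0 s₀ t)]
        _ ≤ γ * ∑ t, K s₀ t * |v s₀| := by
            apply mul_le_mul_of_nonneg_left _ hγ0
            exact Finset.sum_le_sum fun t _ =>
              mul_le_mul_of_nonneg_left (hmax t (Finset.mem_univ t)) (hK0 s₀ t)
        _ = γ * |v s₀| := by rw [← Finset.sum_mul, hK1, one_mul]
    have h0 : |v s₀| = 0 := by nlinarith [abs_nonneg (v s₀)]
    funext s
    have := (hmax s (Finset.mem_univ s)).trans h0.le
    exact abs_nonpos_iff.mp this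
  have hdet : IsUnit (1 - γ • K).det := by
    rw [isUnit_iff_ne_zero]
    intro h
    obtain ⟨v, hv0, hv⟩ := Matrix.exists_mulVec_eq_zero_iff.mpr h
    exact hv0 (hker v hv)
  have hMB : (1 - γ • K) * (1 - γ • K)⁻¹ = 1 := Matrix.mul_nonsing_inv _ hdet
  have hBM : (1 - γ • K)⁻¹ * (1 - γ • K) = 1 := Matrix.nonsing_inv_mul _ hdet
  set B := (1 - γ • K)⁻¹ with hBdef
  set Q := γ • K with hQdef
  -- row sums
  have hrow : ∀ s, ∑ s', B s s' = (1 - γ)⁻¹ := by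
    intro s
    have hc : (1 - Q) *ᵥ (fun _ => (1 - γ)⁻¹) = fun _ => (1 : ℝ) := by
      funext u
      have : (K *ᵥ fun _ => (1 - γ)⁻¹) u = (1 - γ)⁻¹ := by
        simp only [Matrix.mulVec, dotProduct, ← Finset.sum_mul, hK1, one_mul]
      simp only [Matrix.sub_mulVec, Matrix.one_mulVec, hQdef, Matrix.smul_mulVec,
        Pi.sub_apply, Pi.smul_apply, this, smul_eq_mul]
      field_simp
    have h2 : B *ᵥ (fun _ => (1 : ℝ)) = fun _ => (1 - γ)⁻¹ := by
      calc B *ᵥ (fun _ => (1 : ℝ)) = B *ᵥ ((1 - Q) *ᵥ fun _ => (1 - γ)⁻¹) := by rw [hc]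
        _ = (B * (1 - Q)) *ᵥ (fun _ => (1 - γ)⁻¹) := Matrix.mulVec_mulVec _ _ _
        _ = fun _ => (1 - γ)⁻¹ := by rw [hBM, Matrix.one_mulVec]
    have := congrFun h2 s
    simpa [Matrix.mulVec, dotProduct] using this
  -- nonnegativity via Neumann series limit
  have hpow : ∀ n : ℕ, (∀ s t, 0 ≤ (Q ^ n) s t) ∧ (∀ s, ∑ t, (Q ^ n) s t = γ ^ n) := by
    intro n
    induction n with
    | zero =>
      constructor
      · intro s t
        simp [Matrix.one_apply]
        split <;> norm_num
      · intro s; simp [Matrix.one_apply]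
    | succ n ih =>
      have hQ0 : ∀ s t, (0:ℝ) ≤ Q s t := fun s t => by
        simp only [hQdef, Matrix.smul_apply, smul_eq_mul]
        exact mul_nonneg hγ0 (hK0 s t)
      have hQ1 : ∀ s, ∑ t, Q s t = γ := fun s => by
        simp only [hQdef, Matrix.smul_apply, smul_eq_mul, ← Finset.mul_sum, hK1, mul_one]
      constructor
      · intro s t
        rw [pow_succ, Matrix.mul_apply]
        exact Finset.sum_nonneg fun u _ => mul_nonneg (ih.1 s u) (hQ0 u t)
      · intro s
        simp only [pow_succ, Matrix.mul_apply]
        rw [Finset.sum_comm]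
        calc ∑ u, ∑ t, (Q ^ n) s u * Q u t
            = ∑ u, (Q ^ n) s u * γ := by
              refine Finset.sum_congr rfl fun u _ => ?_
              rw [← Finset.mul_sum, hQ1]
          _ = γ ^ n * γ := by rw [← Finset.sum_mul, ih.2]
  have hgeom : ∀ n : ℕ, (∑ k ∈ Finset.range n, Q ^ k) = B - Q ^ n * B := by
    intro n
    have h1 : (∑ k ∈ Finset.range n, Q ^ k) * (1 - Q) = 1 - Q ^ n := by
      have h := geom_sum_mul Q n
      calc (∑ k ∈ Finset.range n, Q ^ k) * (1 - Q)
          = -((∑ k ∈ Finset.range n, Q ^ k) * (Q - 1)) := by noncomm_ring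
        _ = -(Q ^ n - 1) := by rw [h]
        _ = 1 - Q ^ n := by noncomm_ring
    calc (∑ k ∈ Finset.range n, Q ^ k)
        = (∑ k ∈ Finset.range n, Q ^ k) * ((1 - Q) * B) := by rw [hMB, mul_one]
      _ = ((∑ k ∈ Finset.range n, Q ^ k) * (1 - Q)) * B := by rw [mul_assoc]
      _ = (1 - Q ^ n) * B := by rw [h1]
      _ = B - Q ^ n * B := by rw [Matrix.sub_mul, Matrix.one_mul]
  have hB0 : ∀ s t, 0 ≤ B s t := by
    intro s t
    have hent : ∀ n : ℕ, |(Q ^ n * B) s t| ≤ γ ^ n * ∑ u, |B u t| := by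
      intro n
      rw [Matrix.mul_apply]
      calc |∑ u, (Q ^ n) s u * B u t| ≤ ∑ u, |(Q ^ n) s u * B u t| :=
            Finset.abs_sum_le_sum_abs _ _
        _ = ∑ u, (Q ^ n) s u * |B u t| := by
            refine Finset.sum_congr rfl fun u _ => ?_
            rw [abs_mul, abs_of_nonneg ((hpow n).1 s u)]
        _ ≤ ∑ u, (Q ^ n) s u * (∑ w, |B w t|) := by
            refine Finset.sum_le_sum fun u _ => ?_
            exact mul_le_mul_of_nonneg_left
              (Finset.single_le_sum (fun w _ => abs_nonneg (B w t)) (Finset.mem_univ u))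
              ((hpow n).1 s u)
        _ = γ ^ n * ∑ u, |B u t| := by rw [← Finset.sum_mul, (hpow n).2]
    have htend : Tendsto (fun n => (Q ^ n * B) s t) atTop (nhds 0) := by
      apply squeeze_zero_norm (fun n => by simpa [Real.norm_eq_abs] using hent n)
      simpa using (tendsto_pow_atTop_nhds_zero_of_lt_one hγ0 hγ1).mul_const (∑ u, |B u t|)
    have hlim : Tendsto (fun n => (∑ k ∈ Finset.range n, Q ^ k) s t) atTop (nhds (B s t)) := by
      have heq : (fun n => (∑ k ∈ Finset.range n, Q ^ k) s t)
          = fun n => B s t - (Q ^ n * B) s t := by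
        funext n; rw [hgeom n]; simp [Matrix.sub_apply]
      rw [heq]
      simpa using tendsto_const_nhds.sub htend
    refine ge_of_tendsto' hlim fun n => ?_
    rw [Matrix.sum_apply]
    exact Finset.sum_nonneg fun k _ => (hpow k).1 s t
  exact ⟨hMB, hBM, hB0, hrow⟩

end Aux

set_option maxHeartbeats 1000000 in
theorem stmt_15 {S A : Type*} [Fintype S] [Fintype A] [Nonempty S] [Nonempty A] [DecidableEq S]
    (γ : ℝ) (hγ0 : 0 ≤ γ) (hγ1 : γ < 1)
    (P : S → A → S → ℝ) (hP : ∀ s a s', 0 ≤ P s a s')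
    (hPsum : ∀ s a, ∑ s', P s a s' = 1)
    (μ : S → ℝ) (hμ : ∀ s, 0 < μ s) (hμsum : ∑ s, μ s = 1)
    (π : S → A → ℝ) (hπ : ∀ s a, 0 ≤ π s a) (hπsum : ∀ s, ∑ a, π s a = 1)
    (π' : S → A → ℝ) (hπ' : ∀ s a, 0 ≤ π' s a) (hπ'sum : ∀ s, ∑ a, π' s a = 1) :
    ∀ (s : S) (a : A),
      |dSA γ P μ π' s a - dSA γ P μ π s a| ≤
        ((Fintype.card A : ℝ) / (1 - γ) ^ 2) *
          (∑ s', ∑ a', (π' s' a' - π s' a') ^ 2) ^ ((1 : ℝ) / 2) := by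

  intro s a
  simp only [dSA, dPi]
  set κ := (1 - γ)⁻¹ with hκdef
  have hγne : (1 : ℝ) - γ > 0 := by linarith
  have hκpos : 0 < κ := by positivity
  have hone : (1 - γ) * κ = 1 := mul_inv_cancel₀ (by linarith)
  -- stochasticity of Pmat
  have hPm0 : ∀ (ρ : S → A → ℝ), (∀ s a, 0 ≤ ρ s a) → ∀ u v, 0 ≤ Pmat P ρ u v :=
    fun ρ hρ u v => Finset.sum_nonneg fun b _ => mul_nonneg (hρ u b) (hP u b v)
  have hPm1 : ∀ (ρ : S → A → ℝ), (∀ s, ∑ a, ρ s a = 1) → ∀ u, ∑ v, Pmat P ρ u v = 1 := by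
    intro ρ hρ u
    simp only [Pmat]
    rw [Finset.sum_comm]
    calc ∑ b, ∑ v, ρ u b * P u b v = ∑ b, ρ u b := by
          refine Finset.sum_congr rfl fun b _ => ?_
          rw [← Finset.mul_sum, hPsum u b, mul_one]
      _ = 1 := hρ u
  obtain ⟨hMB, hBM, hB0, hBsum⟩ := inv_props γ hγ0 hγ1 (Pmat P π) (hPm0 π hπ) (hPm1 π hπsum)
  obtain ⟨hMB', hBM', hB'0, hB'sum⟩ :=
    inv_props γ hγ0 hγ1 (Pmat P π') (hPm0 π' hπ') (hPm1 π' hπ'sum)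
  set B := (1 - γ • Pmat P π)⁻¹ with hB
  set B' := (1 - γ • Pmat P π')⁻¹ with hB'
  set D : Matrix S S ℝ := Pmat P π' - Pmat P π with hD
  -- entrywise bound for B
  have hBle : ∀ v t, B v t ≤ κ := fun v t => by
    calc B v t ≤ ∑ t', B v t' :=
          Finset.single_le_sum (fun t' _ => hB0 v t') (Finset.mem_univ t)
      _ = κ := hBsum v
  -- delta
  set δ := (∑ s', ∑ a', (π' s' a' - π s' a') ^ 2) ^ ((1 : ℝ) / 2) with hδdef
  have hSig0 : (0:ℝ) ≤ ∑ s', ∑ a', (π' s' a' - π s' a') ^ 2 :=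
    Finset.sum_nonneg fun _ _ => Finset.sum_nonneg fun _ _ => sq_nonneg _
  have hδ0 : 0 ≤ δ := Real.rpow_nonneg hSig0 _
  have hδ : ∀ u b, |π' u b - π u b| ≤ δ := by
    intro u b
    have hx : (π' u b - π u b) ^ 2 ≤ ∑ s', ∑ a', (π' s' a' - π s' a') ^ 2 := by
      calc (π' u b - π u b) ^ 2 ≤ ∑ a', (π' u a' - π u a') ^ 2 :=
            Finset.single_le_sum (f := fun a' => (π' u a' - π u a') ^ 2)
              (fun a' _ => sq_nonneg _) (Finset.mem_univ b)
        _ ≤ ∑ s', ∑ a', (π' s' a' - π s' a') ^ 2 :=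
            Finset.single_le_sum (f := fun s' => ∑ a', (π' s' a' - π s' a') ^ 2)
              (fun s' _ => Finset.sum_nonneg fun a' _ => sq_nonneg _) (Finset.mem_univ u)
    have h2 : ((π' u b - π u b) ^ 2 : ℝ) ^ ((1:ℝ)/2) ≤ δ :=
      Real.rpow_le_rpow (sq_nonneg _) hx (by norm_num)
    calc |π' u b - π u b|
        = ((π' u b - π u b) ^ 2 : ℝ) ^ ((1:ℝ)/2) := by
          rw [show ((π' u b - π u b) ^ 2 : ℝ) = |π' u b - π u b| ^ (2:ℕ) by rw [sq_abs],
            ← Real.rpow_natCast |π' u b - π u b| 2,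
            ← Real.rpow_mul (abs_nonneg _)]
          norm_num
      _ ≤ δ := h2
  -- difference of matrices
  have hdiffmat : B' - B = γ • (B' * (D * B)) := by
    have h1 : (1 - γ • Pmat P π) - (1 - γ • Pmat P π') = γ • D := by
      rw [hD, smul_sub]; abel
    calc B' - B
        = B' * ((1 - γ • Pmat P π) * B) - (B' * (1 - γ • Pmat P π')) * B := by
          rw [hMB, hBM', mul_one, one_mul]
      _ = B' * ((((1 - γ • Pmat P π) - (1 - γ • Pmat P π'))) * B) := by
          noncomm_ring
      _ = B' * ((γ • D) * B) := by rw [h1]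
      _ = γ • (B' * (D * B)) := by
          rw [Matrix.smul_mul, Matrix.mul_smul]
  -- entrywise difference of state distributions
  have hdiff_entry : ∀ t, (∑ u, μ u * B' u t) - (∑ u, μ u * B u t)
      = γ * ∑ u, μ u * ∑ w, B' u w * ∑ v, D w v * B v t := by
    intro t
    rw [← Finset.sum_sub_distrib, Finset.mul_sum]
    refine Finset.sum_congr rfl fun u _ => ?_
    have h1 : B' u t - B u t = γ * (B' * (D * B)) u t := by
      have := congrFun (congrFun hdiffmat u) t
      simpa [Matrix.sub_apply, Matrix.smul_apply] using this
    have h2 : (B' * (D * B)) u t = ∑ w, B' u w * ∑ v, D w v * B v t := by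
      simp [Matrix.mul_apply]
    rw [← mul_sub, h1, h2]; ring
  set cA : ℝ := (Fintype.card A : ℝ) with hcA
  have hcA1 : (1:ℝ) ≤ cA := by
    rw [hcA]; exact_mod_cast Nat.one_le_iff_ne_zero.mpr Fintype.card_ne_zero
  -- inner bound
  have hinner : ∀ w t, |∑ v, D w v * B v t| ≤ cA * δ * κ := by
    intro w t
    have hDv : ∀ v, |D w v| ≤ δ * ∑ b, P w b v := by
      intro v
      have hDwv : D w v = ∑ b, (π' w b - π w b) * P w b v := by
        simp [hD, Matrix.sub_apply, Pmat, ← Finset.sum_sub_distrib, sub_mul]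
      rw [hDwv]
      calc |∑ b, (π' w b - π w b) * P w b v| ≤ ∑ b, |(π' w b - π w b) * P w b v| :=
            Finset.abs_sum_le_sum_abs _ _
        _ ≤ ∑ b, δ * P w b v := by
            refine Finset.sum_le_sum fun b _ => ?_
            rw [abs_mul, abs_of_nonneg (hP w b v)]
            exact mul_le_mul_of_nonneg_right (hδ w b) (hP w b v)
        _ = δ * ∑ b, P w b v := by rw [Finset.mul_sum]
    calc |∑ v, D w v * B v t| ≤ ∑ v, |D w v| * B v t := by
          refine (Finset.abs_sum_le_sum_abs _ _).trans (le_of_eq ?_)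
          exact Finset.sum_congr rfl fun v _ => by
            rw [abs_mul, abs_of_nonneg (hB0 v t)]
      _ ≤ ∑ v, (δ * ∑ b, P w b v) * κ := by
          refine Finset.sum_le_sum fun v _ => ?_
          exact mul_le_mul (hDv v) (hBle v t) (hB0 v t)
            (mul_nonneg hδ0 (Finset.sum_nonneg fun b _ => hP w b v))
      _ = δ * κ * ∑ v, ∑ b, P w b v := by
          rw [Finset.mul_sum]
          exact Finset.sum_congr rfl fun v _ => by ring
      _ = δ * κ * cA := by
          rw [Finset.sum_comm]
          have : ∑ b : A, ∑ v, P w b v = ∑ b : A, (1:ℝ) :=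
            Finset.sum_congr rfl fun b _ => hPsum w b
          rw [this, Finset.sum_const, Finset.card_univ, nsmul_eq_mul, mul_one, hcA]
      _ = cA * δ * κ := by ring
  -- bound on |d' t - d t|
  have hdbound : ∀ t, |(∑ u, μ u * B' u t) - (∑ u, μ u * B u t)|
      ≤ γ * (κ * (cA * δ * κ)) := by
    intro t
    rw [hdiff_entry t, abs_mul, abs_of_nonneg hγ0]
    refine mul_le_mul_of_nonneg_left ?_ hγ0
    calc |∑ u, μ u * ∑ w, B' u w * ∑ v, D w v * B v t|
        ≤ ∑ u, μ u * |∑ w, B' u w * ∑ v, D w v * B v t| := by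
          refine (Finset.abs_sum_le_sum_abs _ _).trans (le_of_eq ?_)
          exact Finset.sum_congr rfl fun u _ => by
            rw [abs_mul, abs_of_nonneg (hμ u).le]
      _ ≤ ∑ u, μ u * (κ * (cA * δ * κ)) := by
          refine Finset.sum_le_sum fun u _ => ?_
          refine mul_le_mul_of_nonneg_left ?_ (hμ u).le
          calc |∑ w, B' u w * ∑ v, D w v * B v t|
              ≤ ∑ w, B' u w * |∑ v, D w v * B v t| := by
                refine (Finset.abs_sum_le_sum_abs _ _).trans (le_of_eq ?_)
                exact Finset.sum_congr rfl fun w _ => by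
                  rw [abs_mul, abs_of_nonneg (hB'0 u w)]
            _ ≤ ∑ w, B' u w * (cA * δ * κ) :=
                Finset.sum_le_sum fun w _ =>
                  mul_le_mul_of_nonneg_left (hinner w t) (hB'0 u w)
            _ = κ * (cA * δ * κ) := by rw [← Finset.sum_mul, hB'sum u]
      _ = κ * (cA * δ * κ) := by rw [← Finset.sum_mul, hμsum, one_mul]
  -- final assembly
  have hd0 : 0 ≤ ∑ u, μ u * B u s :=
    Finset.sum_nonneg fun u _ => mul_nonneg (hμ u).le (hB0 u s)
  have hdle : ∑ u, μ u * B u s ≤ κ := by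
    calc ∑ u, μ u * B u s ≤ ∑ u, μ u * κ :=
          Finset.sum_le_sum fun u _ => mul_le_mul_of_nonneg_left (hBle u s) (hμ u).le
      _ = κ := by rw [← Finset.sum_mul, hμsum, one_mul]
  have hπ'le1 : π' s a ≤ 1 := by
    calc π' s a ≤ ∑ b, π' s b :=
          Finset.single_le_sum (fun b _ => hπ' s b) (Finset.mem_univ a)
      _ = 1 := hπ'sum s
  have hsplit : (∑ u, μ u * B' u s) * π' s a - (∑ u, μ u * B u s) * π s a
      = ((∑ u, μ u * B' u s) - (∑ u, μ u * B u s)) * π' s a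
        + (∑ u, μ u * B u s) * (π' s a - π s a) := by ring
  have hmain : |(∑ u, μ u * B' u s) * π' s a - (∑ u, μ u * B u s) * π s a|
      ≤ cA * κ ^ 2 * δ := by
    rw [hsplit]
    calc |((∑ u, μ u * B' u s) - (∑ u, μ u * B u s)) * π' s a
          + (∑ u, μ u * B u s) * (π' s a - π s a)|
        ≤ |((∑ u, μ u * B' u s) - (∑ u, μ u * B u s))| * π' s a
          + (∑ u, μ u * B u s) * |π' s a - π s a| := by
          refine (abs_add_le _ _).trans (le_of_eq ?_)
          rw [abs_mul, abs_mul, abs_of_nonneg (hπ' s a), abs_of_nonneg hd0]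
      _ ≤ γ * (κ * (cA * δ * κ)) * 1 + κ * δ := by
          refine add_le_add ?_ ?_
          · exact mul_le_mul (hdbound s) hπ'le1 (hπ' s a) (by positivity)
          · exact mul_le_mul hdle (hδ s a) (abs_nonneg _) hκpos.le
      _ ≤ cA * κ ^ 2 * δ := by
          have e1 : cA * κ ^ 2 * δ - γ * (κ * (cA * δ * κ)) * 1
              = cA * κ * δ * ((1 - γ) * κ) := by ring
          have e2 : cA * κ ^ 2 * δ - γ * (κ * (cA * δ * κ)) * 1 = cA * (κ * δ) := by
            rw [e1, hone, mul_one]; ring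
          have e3 : κ * δ ≤ cA * (κ * δ) :=
            le_mul_of_one_le_left (mul_nonneg hκpos.le hδ0) hcA1
          linarith
  calc |(∑ u, μ u * B' u s) * π' s a - (∑ u, μ u * B u s) * π s a|
      ≤ cA * κ ^ 2 * δ := hmain
    _ = cA / (1 - γ) ^ 2 * δ := by
        rw [hκdef, div_eq_mul_inv, ← inv_pow]
end

section
/- Fix a state-action pair (s,a) and define f : (S → A → ℝ) → ℝ by f(π) = (μᵀ (I - γ P^π)⁻¹)(s) * π(s,a), using Mathlib's matrix inverse (which at every policy is the genuine inverse, since I - γ P^π is invertible there). Then f is differentiable at every policy π, and for all policies π and π' the quadratic Taylor remainder is bounded: |f(π') - f(π) - Df(π)[π' - π]| ≤ (γ * |A| / (1-γ)³) * ∑_{s',a'} (π'(s',a') - π(s',a'))², where Df(π) is the Fréchet derivative of f at π. That is, d^π(s,a) is a (2γ|A|/(1-γ)³)-smooth function of the policy. -/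
open Finset

/-- stationary policy predicate -/
def IsPolicy {S A : Type*} [Fintype A] (π : S → A → ℝ) : Prop :=
  (∀ s a, 0 ≤ π s a) ∧ ∀ s, ∑ a, π s a = 1

namespace Stmt16

open Matrix

variable {S A : Type*} [Fintype S] [Fintype A] [DecidableEq S]

noncomputable def Mmat (γ : ℝ) (P : S → A → S → ℝ) (π : S → A → ℝ) : Matrix S S ℝ :=
  1 - γ • Pmat P π

lemma Pmat_add (P : S → A → S → ℝ) (x y : S → A → ℝ) :
    Pmat P (x + y) = Pmat P x + Pmat P y := by
  ext t u
  simp [Pmat, add_mul, Finset.sum_add_distrib, Matrix.add_apply]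

lemma Pmat_smul (P : S → A → S → ℝ) (c : ℝ) (x : S → A → ℝ) :
    Pmat P (c • x) = c • Pmat P x := by
  ext t u
  simp [Pmat, Matrix.smul_apply, Finset.mul_sum, smul_eq_mul, mul_assoc]

lemma Pmat_sub (P : S → A → S → ℝ) (x y : S → A → ℝ) :
    Pmat P (x - y) = Pmat P x - Pmat P y := by
  ext t u
  simp [Pmat, sub_mul, Finset.sum_sub_distrib, Matrix.sub_apply]

lemma vecMul_smulMat (v : S → ℝ) (c : ℝ) (B : Matrix S S ℝ) :
    v ᵥ* (c • B) = c • (v ᵥ* B) := by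
  ext j
  simp only [Matrix.vecMul, dotProduct, Matrix.smul_apply, smul_eq_mul, Pi.smul_apply,
    Finset.mul_sum]
  exact Finset.sum_congr rfl fun i _ => by ring

lemma vecMul_apply (v : S → ℝ) (B : Matrix S S ℝ) (u : S) :
    (v ᵥ* B) u = ∑ t, v t * B t u := rfl

section

variable {γ : ℝ} {P : S → A → S → ℝ} {π : S → A → ℝ}

lemma Pmat_nonneg (hP : ∀ s a s', 0 ≤ P s a s') (hπ : ∀ s a, 0 ≤ π s a) (t u : S) :
    0 ≤ Pmat P π t u :=
  Finset.sum_nonneg fun a _ => mul_nonneg (hπ t a) (hP t a u)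

lemma Pmat_rowsum (hPsum : ∀ s a, ∑ s', P s a s' = 1) (hπ : ∀ s, ∑ a, π s a = 1) (t : S) :
    ∑ u, Pmat P π t u = 1 := by
  unfold Pmat
  rw [Finset.sum_comm]
  simp only [← Finset.mul_sum, hPsum, mul_one]
  exact hπ t

lemma det_ne_zero [Nonempty S] (hγ0 : 0 ≤ γ) (hγ1 : γ < 1)
    (hP : ∀ s a s', 0 ≤ P s a s') (hPsum : ∀ s a, ∑ s', P s a s' = 1)
    (hπ : IsPolicy π) : (Mmat γ P π).det ≠ 0 := by
  intro hdet
  obtain ⟨v, hv0, hv⟩ := Matrix.exists_mulVec_eq_zero_iff.2 hdet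
  obtain ⟨t, -, ht⟩ := Finset.exists_max_image Finset.univ (fun t => |v t|)
    ⟨Classical.arbitrary S, Finset.mem_univ _⟩
  have hvt : v t ≠ 0 := by
    intro h
    apply hv0
    funext u
    have h2 := ht u (Finset.mem_univ u)
    rw [h, abs_zero] at h2
    have := abs_nonneg (v u)
    have : |v u| = 0 := le_antisymm h2 this
    simpa using this
  have hexp : (Mmat γ P π *ᵥ v) t = v t - γ * ∑ u, Pmat P π t u * v u := by
    simp only [Mmat, Matrix.sub_mulVec, Matrix.smul_mulVec, Matrix.one_mulVec,
      Pi.sub_apply, Pi.smul_apply, smul_eq_mul]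
    rfl
  have hkey : v t = γ * ∑ u, Pmat P π t u * v u := by
    have h0 : (Mmat γ P π *ᵥ v) t = 0 := by rw [hv]; rfl
    rw [hexp] at h0
    linarith
  have hb : |v t| ≤ γ * |v t| := by
    have h2 : |v t| = γ * |∑ u, Pmat P π t u * v u| := by
      rw [hkey, abs_mul, abs_of_nonneg hγ0]
    refine h2.trans_le (mul_le_mul_of_nonneg_left ?_ hγ0)
    calc |∑ u, Pmat P π t u * v u| ≤ ∑ u, |Pmat P π t u * v u| :=
          Finset.abs_sum_le_sum_abs _ _
      _ = ∑ u, Pmat P π t u * |v u| := by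
          refine Finset.sum_congr rfl fun u _ => ?_
          rw [abs_mul, abs_of_nonneg (Pmat_nonneg hP hπ.1 t u)]
      _ ≤ ∑ u, Pmat P π t u * |v t| :=
          Finset.sum_le_sum fun u _ =>
            mul_le_mul_of_nonneg_left (ht u (Finset.mem_univ u)) (Pmat_nonneg hP hπ.1 t u)
      _ = |v t| := by rw [← Finset.sum_mul, Pmat_rowsum hPsum hπ.2 t, one_mul]
  have := abs_pos.2 hvt
  nlinarith

lemma isUnit_det [Nonempty S] (hγ0 : 0 ≤ γ) (hγ1 : γ < 1)
    (hP : ∀ s a s', 0 ≤ P s a s') (hPsum : ∀ s a, ∑ s', P s a s' = 1)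
    (hπ : IsPolicy π) : IsUnit (Mmat γ P π).det :=
  isUnit_iff_ne_zero.2 (det_ne_zero hγ0 hγ1 hP hPsum hπ)

lemma N_nonneg [Nonempty S] (hγ0 : 0 ≤ γ) (hγ1 : γ < 1)
    (hP : ∀ s a s', 0 ≤ P s a s') (hPsum : ∀ s a, ∑ s', P s a s' = 1)
    (hπ : IsPolicy π) (t u : S) : 0 ≤ (Mmat γ P π)⁻¹ t u := by
  set N := (Mmat γ P π)⁻¹ with hN
  have hd := isUnit_det hγ0 hγ1 hP hPsum hπ (π := π)
  have hmul : Mmat γ P π * N = 1 := Matrix.mul_nonsing_inv _ hd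
  have hmul' : N - γ • (Pmat P π * N) = 1 := by
    calc N - γ • (Pmat P π * N) = (1 - γ • Pmat P π) * N := by
          rw [Matrix.sub_mul, Matrix.one_mul, Matrix.smul_mul]
      _ = 1 := hmul
  have key : ∀ r, N r u = γ * ∑ w, Pmat P π r w * N w u + (1 : Matrix S S ℝ) r u := by
    intro r
    have h := congrFun (congrFun hmul' r) u
    simp only [Matrix.sub_apply, Matrix.smul_apply, Matrix.mul_apply, smul_eq_mul] at h
    linarith
  obtain ⟨t₀, -, ht₀⟩ := Finset.exists_min_image Finset.univ (fun r => N r u)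
    ⟨t, Finset.mem_univ t⟩
  have hsum : ∑ w, Pmat P π t₀ w * N t₀ u ≤ ∑ w, Pmat P π t₀ w * N w u :=
    Finset.sum_le_sum fun w _ =>
      mul_le_mul_of_nonneg_left (ht₀ w (Finset.mem_univ w)) (Pmat_nonneg hP hπ.1 t₀ w)
  have hsum' : N t₀ u ≤ ∑ w, Pmat P π t₀ w * N w u := by
    calc N t₀ u = (∑ w, Pmat P π t₀ w) * N t₀ u := by
          rw [Pmat_rowsum hPsum hπ.2 t₀, one_mul]
      _ = ∑ w, Pmat P π t₀ w * N t₀ u := Finset.sum_mul _ _ _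
      _ ≤ _ := hsum
  have hone : (0:ℝ) ≤ (1 : Matrix S S ℝ) t₀ u := by
    by_cases h : t₀ = u <;> simp [Matrix.one_apply, h]
  have hmain : γ * N t₀ u + (1 : Matrix S S ℝ) t₀ u ≤ N t₀ u := by
    have := mul_le_mul_of_nonneg_left hsum' hγ0
    linarith [key t₀]
  have h0 : 0 ≤ N t₀ u := by nlinarith
  exact le_trans h0 (ht₀ t (Finset.mem_univ t))

lemma N_rowsum [Nonempty S] (hγ0 : 0 ≤ γ) (hγ1 : γ < 1)
    (hP : ∀ s a s', 0 ≤ P s a s') (hPsum : ∀ s a, ∑ s', P s a s' = 1)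
    (hπ : IsPolicy π) (t : S) : ∑ u, (Mmat γ P π)⁻¹ t u = (1 - γ)⁻¹ := by
  have hd := isUnit_det hγ0 hγ1 hP hPsum hπ (π := π)
  have h1γ : (1:ℝ) - γ ≠ 0 := by linarith
  have hinv : (Mmat γ P π)⁻¹ * Mmat γ P π = 1 := Matrix.nonsing_inv_mul _ hd
  have hMc : (Mmat γ P π) *ᵥ (fun _ => (1-γ)⁻¹) = fun _ => (1:ℝ) := by
    funext r
    have hrow := Pmat_rowsum hPsum hπ.2 r
    simp only [Matrix.mulVec, dotProduct, Mmat, Matrix.sub_apply, Matrix.smul_apply,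
      smul_eq_mul, sub_mul]
    rw [Finset.sum_sub_distrib]
    have h1 : ∑ u, (1:Matrix S S ℝ) r u * (1-γ)⁻¹ = (1-γ)⁻¹ := by
      simp [Matrix.one_apply]
    have h2 : ∑ u, γ * Pmat P π r u * (1-γ)⁻¹ = γ * (1-γ)⁻¹ := by
      calc ∑ u, γ * Pmat P π r u * (1-γ)⁻¹ = γ * (∑ u, Pmat P π r u) * (1-γ)⁻¹ := by
            rw [Finset.mul_sum, Finset.sum_mul]
        _ = γ * (1-γ)⁻¹ := by rw [hrow, mul_one]
    rw [h1, h2]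
    field_simp
  have h3 : (Mmat γ P π)⁻¹ *ᵥ (fun _ => (1:ℝ)) = fun _ => (1-γ)⁻¹ := by
    have h4 : (Mmat γ P π)⁻¹ *ᵥ ((Mmat γ P π) *ᵥ (fun _ => (1-γ)⁻¹)) = fun _ => (1-γ)⁻¹ := by
      rw [Matrix.mulVec_mulVec, hinv, Matrix.one_mulVec]
    rw [hMc] at h4
    exact h4
  have := congrFun h3 t
  simpa [Matrix.mulVec, dotProduct] using this

lemma resolvent {π' : S → A → ℝ} (hd : IsUnit (Mmat γ P π).det) (hd' : IsUnit (Mmat γ P π').det) :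
    (Mmat γ P π')⁻¹ =
      (Mmat γ P π)⁻¹ + γ • ((Mmat γ P π')⁻¹ * Pmat P (π' - π) * (Mmat γ P π)⁻¹) := by
  have hM : Mmat γ P π = Mmat γ P π' + γ • Pmat P (π' - π) := by
    unfold Mmat
    rw [Pmat_sub, smul_sub]
    abel
  calc (Mmat γ P π')⁻¹ = (Mmat γ P π')⁻¹ * (Mmat γ P π * (Mmat γ P π)⁻¹) := by
        rw [Matrix.mul_nonsing_inv _ hd, mul_one]
    _ = ((Mmat γ P π')⁻¹ * Mmat γ P π) * (Mmat γ P π)⁻¹ := by rw [mul_assoc]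
    _ = ((Mmat γ P π')⁻¹ * (Mmat γ P π' + γ • Pmat P (π' - π))) * (Mmat γ P π)⁻¹ := by rw [← hM]
    _ = (1 + γ • ((Mmat γ P π')⁻¹ * Pmat P (π' - π))) * (Mmat γ P π)⁻¹ := by
        rw [mul_add, Matrix.nonsing_inv_mul _ hd', mul_smul_comm]
    _ = (Mmat γ P π)⁻¹ + γ • ((Mmat γ P π')⁻¹ * Pmat P (π' - π) * (Mmat γ P π)⁻¹) := by
        rw [add_mul, one_mul, smul_mul_assoc, mul_assoc]

lemma rem_eq {π' : S → A → ℝ} (hd : IsUnit (Mmat γ P π).det) (hd' : IsUnit (Mmat γ P π').det)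
    (μ : S → ℝ) (s : S) (a : A) :
    (μ ᵥ* (Mmat γ P π')⁻¹) s * π' s a - (μ ᵥ* (Mmat γ P π)⁻¹) s * π s a
      - (γ * ((((μ ᵥ* (Mmat γ P π)⁻¹) ᵥ* Pmat P (π' - π)) ᵥ* (Mmat γ P π)⁻¹) s) * π s a
          + (μ ᵥ* (Mmat γ P π)⁻¹) s * (π' s a - π s a))
    = γ * ((((μ ᵥ* (Mmat γ P π)⁻¹) ᵥ* Pmat P (π' - π)) ᵥ* (Mmat γ P π)⁻¹) s) * (π' s a - π s a)
      + γ^2 * ((((((μ ᵥ* (Mmat γ P π')⁻¹) ᵥ* Pmat P (π' - π)) ᵥ* (Mmat γ P π)⁻¹)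
            ᵥ* Pmat P (π' - π)) ᵥ* (Mmat γ P π)⁻¹) s) * π' s a := by
  have hres : μ ᵥ* (Mmat γ P π')⁻¹ = μ ᵥ* (Mmat γ P π)⁻¹
      + γ • (((μ ᵥ* (Mmat γ P π')⁻¹) ᵥ* Pmat P (π' - π)) ᵥ* (Mmat γ P π)⁻¹) := by
    conv_lhs => rw [resolvent hd hd']
    rw [Matrix.vecMul_add, vecMul_smulMat, ← Matrix.vecMul_vecMul, ← Matrix.vecMul_vecMul]
  set N := (Mmat γ P π)⁻¹
  set N' := (Mmat γ P π')⁻¹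
  set Q := Pmat P (π' - π)
  have e2 : (μ ᵥ* N') s = (μ ᵥ* N) s + γ * (((μ ᵥ* N') ᵥ* Q) ᵥ* N) s := by
    have := congrFun hres s
    simpa using this
  have e3 : (((μ ᵥ* N') ᵥ* Q) ᵥ* N) s
      = (((μ ᵥ* N) ᵥ* Q) ᵥ* N) s + γ * ((((((μ ᵥ* N') ᵥ* Q) ᵥ* N) ᵥ* Q) ᵥ* N) s) := by
    conv_lhs => rw [hres]
    rw [Matrix.add_vecMul, Matrix.smul_vecMul, Matrix.add_vecMul, Matrix.smul_vecMul]
    simp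
  rw [e2, e3]
  ring

end

lemma abs_le_l1 (v : S → ℝ) (u : S) : |v u| ≤ ∑ t, |v t| :=
  Finset.single_le_sum (f := fun t => |v t|) (fun t _ => abs_nonneg _) (Finset.mem_univ u)

lemma l1_vecMul_le (v : S → ℝ) (B : Matrix S S ℝ) {c : ℝ} (hB : ∀ t, ∑ u, |B t u| ≤ c) :
    ∑ u, |(v ᵥ* B) u| ≤ (∑ t, |v t|) * c := by
  calc ∑ u, |(v ᵥ* B) u| = ∑ u, |∑ t, v t * B t u| := rfl
    _ ≤ ∑ u, ∑ t, |v t| * |B t u| :=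
        Finset.sum_le_sum fun u _ =>
          (Finset.abs_sum_le_sum_abs _ _).trans_eq
            (Finset.sum_congr rfl fun t _ => abs_mul _ _)
    _ = ∑ t, ∑ u, |v t| * |B t u| := Finset.sum_comm
    _ = ∑ t, |v t| * ∑ u, |B t u| := by simp [Finset.mul_sum]
    _ ≤ ∑ t, |v t| * c :=
        Finset.sum_le_sum fun t _ => mul_le_mul_of_nonneg_left (hB t) (abs_nonneg _)
    _ = (∑ t, |v t|) * c := (Finset.sum_mul _ _ _).symm

lemma l1_chain (v : S → ℝ) (B : Matrix S S ℝ) {k c : ℝ} (hv : ∑ t, |v t| ≤ k)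
    (hB : ∀ t, ∑ u, |B t u| ≤ c) (hc : 0 ≤ c) :
    ∑ u, |(v ᵥ* B) u| ≤ k * c :=
  (l1_vecMul_le v B hB).trans (mul_le_mul_of_nonneg_right hv hc)

lemma rows_le_K (B : Matrix S S ℝ) (t : S) :
    ∑ u, |B t u| ≤ ∑ t', ∑ u, |B t' u| :=
  Finset.single_le_sum (f := fun t' => ∑ u, |B t' u|)
    (fun t' _ => Finset.sum_nonneg fun u _ => abs_nonneg _) (Finset.mem_univ t)

section

variable {γ : ℝ} {P : S → A → S → ℝ} {π : S → A → ℝ}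

lemma Pmat_l1_row_le (hP : ∀ s a s', 0 ≤ P s a s') (hPsum : ∀ s a, ∑ s', P s a s' = 1)
    (Δ : S → A → ℝ) (t : S) : ∑ u, |Pmat P Δ t u| ≤ ∑ a', |Δ t a'| := by
  calc ∑ u, |Pmat P Δ t u| = ∑ u, |∑ a', Δ t a' * P t a' u| := rfl
    _ ≤ ∑ u, ∑ a', |Δ t a'| * P t a' u :=
        Finset.sum_le_sum fun u _ =>
          (Finset.abs_sum_le_sum_abs _ _).trans_eq
            (Finset.sum_congr rfl fun a' _ => by rw [abs_mul, abs_of_nonneg (hP t a' u)])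
    _ = ∑ a', ∑ u, |Δ t a'| * P t a' u := Finset.sum_comm
    _ = ∑ a', |Δ t a'| * ∑ u, P t a' u := by simp [Finset.mul_sum]
    _ = ∑ a', |Δ t a'| := by simp [hPsum]

lemma N_l1_row [Nonempty S] (hγ0 : 0 ≤ γ) (hγ1 : γ < 1)
    (hP : ∀ s a s', 0 ≤ P s a s') (hPsum : ∀ s a, ∑ s', P s a s' = 1)
    (hπ : IsPolicy π) (t : S) : ∑ u, |(Mmat γ P π)⁻¹ t u| ≤ (1 - γ)⁻¹ := by
  have h : ∀ u, |(Mmat γ P π)⁻¹ t u| = (Mmat γ P π)⁻¹ t u := fun u =>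
    abs_of_nonneg (N_nonneg hγ0 hγ1 hP hPsum hπ t u)
  simp only [h]
  exact le_of_eq (N_rowsum hγ0 hγ1 hP hPsum hπ t)

end

noncomputable def Lmap (γ : ℝ) (P : S → A → S → ℝ) (μ : S → ℝ) (s : S) (a : A)
    (π : S → A → ℝ) : (S → A → ℝ) →L[ℝ] ℝ :=
  LinearMap.toContinuousLinearMap
  { toFun := fun Δ => γ * ((((μ ᵥ* (Mmat γ P π)⁻¹) ᵥ* Pmat P Δ) ᵥ* (Mmat γ P π)⁻¹) s) * π s a
      + (μ ᵥ* (Mmat γ P π)⁻¹) s * Δ s a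
    map_add' := by
      intro x y
      simp only [Pmat_add, Matrix.vecMul_add, Matrix.add_vecMul, Pi.add_apply]
      ring
    map_smul' := by
      intro c x
      simp only [Pmat_smul, vecMul_smulMat, Matrix.smul_vecMul, Pi.smul_apply, smul_eq_mul,
        RingHom.id_apply]
      ring }

lemma Lmap_apply (γ : ℝ) (P : S → A → S → ℝ) (μ : S → ℝ) (s : S) (a : A)
    (π Δ : S → A → ℝ) :
    Lmap γ P μ s a π Δ
      = γ * ((((μ ᵥ* (Mmat γ P π)⁻¹) ᵥ* Pmat P Δ) ᵥ* (Mmat γ P π)⁻¹) s) * π s a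
        + (μ ᵥ* (Mmat γ P π)⁻¹) s * Δ s a := by
  simp [Lmap]

lemma abs_comb_le {g T1 T2 x y B1 B2 bx by' : ℝ} (hg : 0 ≤ g)
    (h1 : |T1| ≤ B1) (h2 : |T2| ≤ B2) (hx : |x| ≤ bx) (hy : |y| ≤ by')
    (hB1 : 0 ≤ B1) (hB2 : 0 ≤ B2) :
    |g * T1 * x + g ^ 2 * T2 * y| ≤ g * B1 * bx + g ^ 2 * B2 * by' := by
  have e1 : |g * T1 * x| ≤ g * B1 * bx := by
    rw [abs_mul, abs_mul, abs_of_nonneg hg]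
    exact mul_le_mul (mul_le_mul_of_nonneg_left h1 hg) hx (abs_nonneg _) (mul_nonneg hg hB1)
  have e2 : |g ^ 2 * T2 * y| ≤ g ^ 2 * B2 * by' := by
    rw [abs_mul, abs_mul, abs_of_nonneg (sq_nonneg g)]
    exact mul_le_mul (mul_le_mul_of_nonneg_left h2 (sq_nonneg g)) hy (abs_nonneg _)
      (mul_nonneg (sq_nonneg g) hB2)
  exact (abs_add_le _ _).trans (add_le_add e1 e2)

end Stmt16

open Matrix Topology in
theorem stmt_16 {S A : Type*} [Fintype S] [Fintype A] [Nonempty S] [Nonempty A] [DecidableEq S]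
    (γ : ℝ) (hγ0 : 0 ≤ γ) (hγ1 : γ < 1)
    (P : S → A → S → ℝ) (hP : ∀ s a s', 0 ≤ P s a s')
    (hPsum : ∀ s a, ∑ s', P s a s' = 1)
    (μ : S → ℝ) (hμ : ∀ s, 0 < μ s) (hμsum : ∑ s, μ s = 1)
    (s : S) (a : A)
    (f : (S → A → ℝ) → ℝ)
    (hf : ∀ π : S → A → ℝ, f π = dPi γ P μ π s * π s a) :
    (∀ π : S → A → ℝ, IsPolicy π → DifferentiableAt ℝ f π) ∧
    (∀ π π' : S → A → ℝ, IsPolicy π → IsPolicy π' →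
      |f π' - f π - fderiv ℝ f π (π' - π)| ≤
        (γ * (Fintype.card A : ℝ) / (1 - γ) ^ 3) *
          ∑ s', ∑ a', (π' s' a' - π s' a') ^ 2) := by
  classical
  have h1γ : (0:ℝ) < 1 - γ := by linarith
  have hne : (1:ℝ) - γ ≠ 0 := ne_of_gt h1γ
  have he0 : (0:ℝ) ≤ (1 - γ)⁻¹ := inv_nonneg.2 h1γ.le
  have hμ1 : ∑ t, |μ t| ≤ 1 := by
    rw [Finset.sum_congr rfl fun t _ => abs_of_pos (hμ t)]
    exact le_of_eq hμsum
  have hfv : ∀ x : S → A → ℝ, f x = (μ ᵥ* (Stmt16.Mmat γ P x)⁻¹) s * x s a := fun x => by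
    rw [hf x]; rfl
  set cA := (Fintype.card A : ℝ) with hcA
  have hcA0 : (0:ℝ) ≤ cA := Nat.cast_nonneg _
  have key : ∀ π : S → A → ℝ, IsPolicy π → HasFDerivAt f (Stmt16.Lmap γ P μ s a π) π := by
    intro π hπ
    have hd := Stmt16.isUnit_det hγ0 hγ1 hP hPsum hπ
    have hdet0 := Stmt16.det_ne_zero hγ0 hγ1 hP hPsum hπ
    have hNrow := Stmt16.N_l1_row hγ0 hγ1 hP hPsum hπ
    have hMcont : Continuous fun x : S → A → ℝ => Stmt16.Mmat γ P x := by
      apply continuous_matrix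
      intro i j
      have hrw : (fun x : S → A → ℝ => Stmt16.Mmat γ P x i j)
          = fun x => (1 : Matrix S S ℝ) i j - γ * ∑ a', x i a' * P i a' j := by
        funext x
        simp [Stmt16.Mmat, Matrix.sub_apply, Matrix.smul_apply, smul_eq_mul, Pmat]
      rw [hrw]
      refine continuous_const.sub (continuous_const.mul ?_)
      exact continuous_finset_sum _ fun a' _ =>
        (continuous_apply_apply i a').mul continuous_const
    have hNcont : ContinuousAt (fun x : S → A → ℝ => (Stmt16.Mmat γ P x)⁻¹) π := by
      have h1 : ContinuousAt Ring.inverse ((Stmt16.Mmat γ P π).det) := by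
        rw [Ring.inverse_eq_inv']
        exact continuousAt_inv₀ hdet0
      exact (continuousAt_matrix_inv _ h1).comp hMcont.continuousAt
    set KN := ∑ t, ∑ u, |(Stmt16.Mmat γ P π)⁻¹ t u| with hKN
    have hKN0 : 0 ≤ KN := Finset.sum_nonneg fun _ _ => Finset.sum_nonneg fun _ _ => abs_nonneg _
    have hKcont : ContinuousAt
        (fun x : S → A → ℝ => ∑ t, ∑ u, |(Stmt16.Mmat γ P x)⁻¹ t u|) π := by
      have h2 : Continuous fun B : Matrix S S ℝ => ∑ t, ∑ u, |B t u| :=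
        continuous_finset_sum _ fun t _ => continuous_finset_sum _ fun u _ =>
          ((continuous_apply u).comp (continuous_apply t)).abs
      exact h2.continuousAt.comp hNcont
    have htend : Filter.Tendsto (fun h : S → A → ℝ => π + h) (𝓝 0) (𝓝 π) := by
      have h3 := (show Continuous fun h : S → A → ℝ => π + h from
        continuous_const.add continuous_id).tendsto (0 : S → A → ℝ)
      simpa using h3
    have ev1 : ∀ᶠ h : S → A → ℝ in 𝓝 0, (Stmt16.Mmat γ P (π + h)).det ≠ 0 :=
      htend.eventually ((hMcont.matrix_det.continuousAt).eventually_ne hdet0)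
    have ev2 : ∀ᶠ h : S → A → ℝ in 𝓝 0,
        ∑ t, ∑ u, |(Stmt16.Mmat γ P (π + h))⁻¹ t u| < KN + 1 := by
      have hmem : Set.Iio (KN + 1) ∈
          𝓝 (∑ t, ∑ u, |(Stmt16.Mmat γ P π)⁻¹ t u|) := by
        rw [← hKN]
        exact Iio_mem_nhds (by linarith)
      have hev : ∀ᶠ x in 𝓝 π, ∑ t, ∑ u, |(Stmt16.Mmat γ P x)⁻¹ t u| < KN + 1 := by
        filter_upwards [hKcont hmem] with x hx
        exact hx
      exact Filter.Tendsto.eventually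
        (p := fun x => ∑ t, ∑ u, |(Stmt16.Mmat γ P x)⁻¹ t u| < KN + 1) htend hev
    have ev3 : ∀ᶠ h : S → A → ℝ in 𝓝 0, ‖h‖ < 1 := by
      filter_upwards [Metric.ball_mem_nhds (0 : S → A → ℝ) one_pos] with h hh
      simpa [Metric.mem_ball, dist_zero_right] using hh
    rw [hasFDerivAt_iff_isLittleO_nhds_zero]
    set C := γ * ((1-γ)⁻¹ * cA * (1-γ)⁻¹)
      + γ^2 * ((KN+1) * cA * (1-γ)⁻¹ * cA * (1-γ)⁻¹) * 2 with hC
    have hall : ∀ᶠ h : S → A → ℝ in 𝓝 0,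
        |f (π + h) - f π - Stmt16.Lmap γ P μ s a π h| ≤ |C| * ‖h‖^2 := by
      filter_upwards [ev1, ev2, ev3] with h h1 h2 h3
      have hd' : IsUnit (Stmt16.Mmat γ P (π + h)).det := isUnit_iff_ne_zero.2 h1
      have hΔ : π + h - π = h := add_sub_cancel_left π h
      have hrem := Stmt16.rem_eq (π := π) (π' := π + h) hd hd' μ s a
      rw [hΔ] at hrem
      rw [hfv (π + h), hfv π, Stmt16.Lmap_apply]
      have hsub : h s a = (π + h) s a - π s a := by simp
      rw [hsub, hrem]
      have habs : ∀ t a', |h t a'| ≤ ‖h‖ := fun t a' => by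
        rw [← Real.norm_eq_abs]
        exact (norm_le_pi_norm (h t) a').trans (norm_le_pi_norm h t)
      have hQrow : ∀ t, ∑ u, |Pmat P h t u| ≤ cA * ‖h‖ := by
        intro t
        refine (Stmt16.Pmat_l1_row_le hP hPsum h t).trans ?_
        calc ∑ a', |h t a'| ≤ ∑ _a' : A, ‖h‖ := Finset.sum_le_sum fun a' _ => habs t a'
          _ = cA * ‖h‖ := by
              rw [Finset.sum_const, Finset.card_univ, nsmul_eq_mul, hcA]
      have hn0 : (0:ℝ) ≤ cA * ‖h‖ := mul_nonneg hcA0 (norm_nonneg _)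
      have hN'row : ∀ t, ∑ u, |(Stmt16.Mmat γ P (π + h))⁻¹ t u| ≤ KN + 1 := fun t =>
        (Stmt16.rows_le_K _ t).trans h2.le
      have hKN1 : (0:ℝ) ≤ KN + 1 := by linarith
      have c1 : ∑ u, |(μ ᵥ* (Stmt16.Mmat γ P π)⁻¹) u| ≤ 1 * (1-γ)⁻¹ :=
        Stmt16.l1_chain _ _ hμ1 hNrow he0
      have c2 : ∑ u, |((μ ᵥ* (Stmt16.Mmat γ P π)⁻¹) ᵥ* Pmat P h) u|
          ≤ 1 * (1-γ)⁻¹ * (cA * ‖h‖) := Stmt16.l1_chain _ _ c1 hQrow hn0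
      have c3 : ∑ u, |(((μ ᵥ* (Stmt16.Mmat γ P π)⁻¹) ᵥ* Pmat P h) ᵥ* (Stmt16.Mmat γ P π)⁻¹) u|
          ≤ 1 * (1-γ)⁻¹ * (cA * ‖h‖) * (1-γ)⁻¹ := Stmt16.l1_chain _ _ c2 hNrow he0
      have hT1 := (Stmt16.abs_le_l1 (((μ ᵥ* (Stmt16.Mmat γ P π)⁻¹) ᵥ* Pmat P h)
        ᵥ* (Stmt16.Mmat γ P π)⁻¹) s).trans c3
      have c1' : ∑ u, |(μ ᵥ* (Stmt16.Mmat γ P (π + h))⁻¹) u| ≤ 1 * (KN + 1) :=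
        Stmt16.l1_chain _ _ hμ1 hN'row hKN1
      have c2' : ∑ u, |((μ ᵥ* (Stmt16.Mmat γ P (π + h))⁻¹) ᵥ* Pmat P h) u|
          ≤ 1 * (KN + 1) * (cA * ‖h‖) := Stmt16.l1_chain _ _ c1' hQrow hn0
      have c3' : ∑ u, |(((μ ᵥ* (Stmt16.Mmat γ P (π + h))⁻¹) ᵥ* Pmat P h)
            ᵥ* (Stmt16.Mmat γ P π)⁻¹) u|
          ≤ 1 * (KN + 1) * (cA * ‖h‖) * (1-γ)⁻¹ := Stmt16.l1_chain _ _ c2' hNrow he0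
      have c4' : ∑ u, |((((μ ᵥ* (Stmt16.Mmat γ P (π + h))⁻¹) ᵥ* Pmat P h)
            ᵥ* (Stmt16.Mmat γ P π)⁻¹) ᵥ* Pmat P h) u|
          ≤ 1 * (KN + 1) * (cA * ‖h‖) * (1-γ)⁻¹ * (cA * ‖h‖) :=
        Stmt16.l1_chain _ _ c3' hQrow hn0
      have c5' : ∑ u, |(((((μ ᵥ* (Stmt16.Mmat γ P (π + h))⁻¹) ᵥ* Pmat P h)
            ᵥ* (Stmt16.Mmat γ P π)⁻¹) ᵥ* Pmat P h) ᵥ* (Stmt16.Mmat γ P π)⁻¹) u|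
          ≤ 1 * (KN + 1) * (cA * ‖h‖) * (1-γ)⁻¹ * (cA * ‖h‖) * (1-γ)⁻¹ :=
        Stmt16.l1_chain _ _ c4' hNrow he0
      have hT2 := (Stmt16.abs_le_l1 ((((((μ ᵥ* (Stmt16.Mmat γ P (π + h))⁻¹) ᵥ* Pmat P h)
        ᵥ* (Stmt16.Mmat γ P π)⁻¹) ᵥ* Pmat P h) ᵥ* (Stmt16.Mmat γ P π)⁻¹)) s).trans c5'
      have hsa2 : |(π + h) s a - π s a| ≤ ‖h‖ := by
        rw [← hsub]
        exact habs s a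
      have hπh1 : |(π + h) s a| ≤ 2 := by
        have h4 : π s a ≤ 1 := by
          have h5 := Finset.single_le_sum (f := fun a' => π s a')
            (fun a' _ => hπ.1 s a') (Finset.mem_univ a)
          rw [hπ.2 s] at h5
          exact h5
        calc |(π + h) s a| = |π s a + h s a| := rfl
          _ ≤ |π s a| + |h s a| := abs_add_le _ _
          _ ≤ 1 + 1 := add_le_add
              (by rw [abs_of_nonneg (hπ.1 s a)]; exact h4) ((habs s a).trans h3.le)
          _ = 2 := by norm_num
      have hB1 : (0:ℝ) ≤ 1 * (1-γ)⁻¹ * (cA * ‖h‖) * (1-γ)⁻¹ :=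
        mul_nonneg (mul_nonneg (mul_nonneg zero_le_one he0) hn0) he0
      have hB2 : (0:ℝ) ≤ 1 * (KN + 1) * (cA * ‖h‖) * (1-γ)⁻¹ * (cA * ‖h‖) * (1-γ)⁻¹ :=
        mul_nonneg (mul_nonneg (mul_nonneg (mul_nonneg
          (mul_nonneg zero_le_one hKN1) hn0) he0) hn0) he0
      refine (Stmt16.abs_comb_le hγ0 hT1 hT2 hsa2 hπh1 hB1 hB2).trans ?_
      have heq : γ * (1 * (1-γ)⁻¹ * (cA * ‖h‖) * (1-γ)⁻¹) * ‖h‖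
          + γ ^ 2 * (1 * (KN + 1) * (cA * ‖h‖) * (1-γ)⁻¹ * (cA * ‖h‖) * (1-γ)⁻¹) * 2
          = C * ‖h‖^2 := by
        rw [hC]; ring
      rw [heq]
      exact mul_le_mul_of_nonneg_right (le_abs_self C) (sq_nonneg _)
    rw [Asymptotics.isLittleO_iff]
    intro ε hε
    have hD0 : (0:ℝ) ≤ |C| := abs_nonneg _
    have hsmall : ∀ᶠ h : S → A → ℝ in 𝓝 0, ‖h‖ ≤ ε / (|C| + 1) := by
      filter_upwards [Metric.closedBall_mem_nhds (0 : S → A → ℝ)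
        (show (0:ℝ) < ε / (|C| + 1) by positivity)] with h hh
      simpa [Metric.mem_closedBall, dist_zero_right] using hh
    filter_upwards [hall, hsmall] with h hb hs
    rw [Real.norm_eq_abs]
    have h1 : ‖h‖ * (|C| + 1) ≤ ε := by
      rw [← le_div_iff₀ (by positivity)]
      exact hs
    calc |f (π + h) - f π - Stmt16.Lmap γ P μ s a π h| ≤ |C| * ‖h‖^2 := hb
      _ ≤ ε * ‖h‖ := by
          nlinarith [mul_le_mul_of_nonneg_right h1 (norm_nonneg h), norm_nonneg h]
  refine ⟨fun π hπ => (key π hπ).differentiableAt, ?_⟩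
  intro π π' hπ hπ'
  have hd := Stmt16.isUnit_det hγ0 hγ1 hP hPsum hπ
  have hd' := Stmt16.isUnit_det hγ0 hγ1 hP hPsum hπ'
  rw [(key π hπ).fderiv, hfv π', hfv π, Stmt16.Lmap_apply]
  simp only [Pi.sub_apply]
  rw [Stmt16.rem_eq hd hd' μ s a]
  set Sig2 := ∑ s', ∑ a', (π' s' a' - π s' a') ^ 2 with hSig2
  have hSig0 : 0 ≤ Sig2 := Finset.sum_nonneg fun _ _ => Finset.sum_nonneg fun _ _ => sq_nonneg _
  set δ := Real.sqrt (cA * Sig2) with hδ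
  have hδ0 : 0 ≤ δ := Real.sqrt_nonneg _
  have hδ2 : δ ^ 2 = cA * Sig2 := Real.sq_sqrt (mul_nonneg hcA0 hSig0)
  have hδδ : δ * δ = cA * Sig2 := by rw [← pow_two]; exact hδ2
  have hrow : ∀ t, ∑ a', |π' t a' - π t a'| ≤ δ := by
    intro t
    have h1 : (∑ a', |π' t a' - π t a'|) ^ 2 ≤ cA * Sig2 := by
      refine le_trans sq_sum_le_card_mul_sum_sq ?_
      rw [Finset.card_univ]
      refine mul_le_mul_of_nonneg_left ?_ hcA0
      calc ∑ a', |π' t a' - π t a'| ^ 2 = ∑ a', (π' t a' - π t a') ^ 2 := by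
            simp [sq_abs]
        _ ≤ Sig2 := Finset.single_le_sum (f := fun r => ∑ a', (π' r a' - π r a') ^ 2)
            (fun r _ => Finset.sum_nonneg fun _ _ => sq_nonneg _) (Finset.mem_univ t)
    calc ∑ a', |π' t a' - π t a'| = Real.sqrt ((∑ a', |π' t a' - π t a'|) ^ 2) :=
          (Real.sqrt_sq (Finset.sum_nonneg fun _ _ => abs_nonneg _)).symm
      _ ≤ δ := Real.sqrt_le_sqrt h1
  have hQrow : ∀ t, ∑ u, |Pmat P (π' - π) t u| ≤ δ := by
    intro t
    refine (Stmt16.Pmat_l1_row_le hP hPsum _ t).trans ?_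
    simpa [Pi.sub_apply] using hrow t
  have hNrow := Stmt16.N_l1_row hγ0 hγ1 hP hPsum hπ
  have hNrow' := Stmt16.N_l1_row hγ0 hγ1 hP hPsum hπ'
  have c1 : ∑ u, |(μ ᵥ* (Stmt16.Mmat γ P π)⁻¹) u| ≤ 1 * (1-γ)⁻¹ :=
    Stmt16.l1_chain _ _ hμ1 hNrow he0
  have c2 : ∑ u, |((μ ᵥ* (Stmt16.Mmat γ P π)⁻¹) ᵥ* Pmat P (π' - π)) u|
      ≤ 1 * (1-γ)⁻¹ * δ := Stmt16.l1_chain _ _ c1 hQrow hδ0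
  have c3 : ∑ u, |(((μ ᵥ* (Stmt16.Mmat γ P π)⁻¹) ᵥ* Pmat P (π' - π))
        ᵥ* (Stmt16.Mmat γ P π)⁻¹) u|
      ≤ 1 * (1-γ)⁻¹ * δ * (1-γ)⁻¹ := Stmt16.l1_chain _ _ c2 hNrow he0
  have hT1 := (Stmt16.abs_le_l1 (((μ ᵥ* (Stmt16.Mmat γ P π)⁻¹) ᵥ* Pmat P (π' - π))
    ᵥ* (Stmt16.Mmat γ P π)⁻¹) s).trans c3
  have c1' : ∑ u, |(μ ᵥ* (Stmt16.Mmat γ P π')⁻¹) u| ≤ 1 * (1-γ)⁻¹ :=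
    Stmt16.l1_chain _ _ hμ1 hNrow' he0
  have c2' : ∑ u, |((μ ᵥ* (Stmt16.Mmat γ P π')⁻¹) ᵥ* Pmat P (π' - π)) u|
      ≤ 1 * (1-γ)⁻¹ * δ := Stmt16.l1_chain _ _ c1' hQrow hδ0
  have c3' : ∑ u, |(((μ ᵥ* (Stmt16.Mmat γ P π')⁻¹) ᵥ* Pmat P (π' - π))
        ᵥ* (Stmt16.Mmat γ P π)⁻¹) u|
      ≤ 1 * (1-γ)⁻¹ * δ * (1-γ)⁻¹ := Stmt16.l1_chain _ _ c2' hNrow he0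
  have c4' : ∑ u, |((((μ ᵥ* (Stmt16.Mmat γ P π')⁻¹) ᵥ* Pmat P (π' - π))
        ᵥ* (Stmt16.Mmat γ P π)⁻¹) ᵥ* Pmat P (π' - π)) u|
      ≤ 1 * (1-γ)⁻¹ * δ * (1-γ)⁻¹ * δ := Stmt16.l1_chain _ _ c3' hQrow hδ0
  have c5' : ∑ u, |(((((μ ᵥ* (Stmt16.Mmat γ P π')⁻¹) ᵥ* Pmat P (π' - π))
        ᵥ* (Stmt16.Mmat γ P π)⁻¹) ᵥ* Pmat P (π' - π)) ᵥ* (Stmt16.Mmat γ P π)⁻¹) u|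
      ≤ 1 * (1-γ)⁻¹ * δ * (1-γ)⁻¹ * δ * (1-γ)⁻¹ := Stmt16.l1_chain _ _ c4' hNrow he0
  have hT2 := (Stmt16.abs_le_l1 ((((((μ ᵥ* (Stmt16.Mmat γ P π')⁻¹) ᵥ* Pmat P (π' - π))
    ᵥ* (Stmt16.Mmat γ P π)⁻¹) ᵥ* Pmat P (π' - π)) ᵥ* (Stmt16.Mmat γ P π)⁻¹)) s).trans c5'
  have hΔsa : |π' s a - π s a| ≤ δ :=
    le_trans (Finset.single_le_sum (f := fun a' => |π' s a' - π s a'|)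
      (fun _ _ => abs_nonneg _) (Finset.mem_univ a)) (hrow s)
  have hπ'sa : |π' s a| ≤ 1 := by
    have h5 := Finset.single_le_sum (f := fun a' => π' s a')
      (fun a' _ => hπ'.1 s a') (Finset.mem_univ a)
    rw [hπ'.2 s] at h5
    rw [abs_of_nonneg (hπ'.1 s a)]
    exact h5
  have hB1 : (0:ℝ) ≤ 1 * (1-γ)⁻¹ * δ * (1-γ)⁻¹ :=
    mul_nonneg (mul_nonneg (mul_nonneg zero_le_one he0) hδ0) he0
  have hB2 : (0:ℝ) ≤ 1 * (1-γ)⁻¹ * δ * (1-γ)⁻¹ * δ * (1-γ)⁻¹ :=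
    mul_nonneg (mul_nonneg hB1 hδ0) he0
  refine (Stmt16.abs_comb_le hγ0 hT1 hT2 hΔsa hπ'sa hB1 hB2).trans ?_
  have heq : γ * (1 * (1-γ)⁻¹ * δ * (1-γ)⁻¹) * δ
      + γ ^ 2 * (1 * (1-γ)⁻¹ * δ * (1-γ)⁻¹ * δ * (1-γ)⁻¹) * 1
      = γ * cA / (1 - γ) ^ 3 * Sig2 := by
    rw [div_mul_eq_mul_div, eq_div_iff (pow_ne_zero 3 hne)]
    have h2 : ((1:ℝ) - γ) * (1 - γ)⁻¹ = 1 := mul_inv_cancel₀ hne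
    calc (γ * (1 * (1-γ)⁻¹ * δ * (1-γ)⁻¹) * δ
          + γ ^ 2 * (1 * (1-γ)⁻¹ * δ * (1-γ)⁻¹ * δ * (1-γ)⁻¹) * 1) * (1 - γ) ^ 3
        = (δ * δ) * γ * (((1-γ) * (1-γ)⁻¹) ^ 2) * (1-γ)
            + (δ * δ) * γ ^ 2 * (((1-γ) * (1-γ)⁻¹) ^ 3) := by ring
      _ = (δ * δ) * γ * (1-γ) + (δ * δ) * γ ^ 2 := by rw [h2]; ring
      _ = γ * cA * Sig2 := by rw [hδδ]; ring
  rw [heq]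
end

section
/- Fix a nominal reward R₀ : S → A → ℝ, α > 0, and p ∈ (1,∞) with Hölder conjugate q = p/(p-1). Define F : (S → A → ℝ) → ℝ by F(π) = ∑_{s,a} D(π)(s,a) * R₀(s,a) - α * (∑_{s,a} D(π)(s,a)^q)^{1/q}, where D(π)(s,a) = (μᵀ (I - γ P^π)⁻¹)(s) * π(s,a) is defined using Mathlib's matrix inverse (which at every policy is the genuine inverse). Then F, which on policies equals the reward-robust return ρ^π_{𝓡_p} = min_{‖R-R₀‖_p ≤ α} ρ^π_R, is infinitely continuously differentiable (ContDiffAt ℝ ⊤) at every policy π satisfying π(s,a) > 0 for all (s,a); in particular all entries D(π)(s,a) are strictly positive at such π. -/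
open Finset

open Finset

section Aux
variable {E : Type*} [NormedAddCommGroup E] [NormedSpace ℝ E]

theorem myContDiffAt_finset_prod {ι : Type*} {f : ι → E → ℝ} {s : Finset ι} {x : E}
    (h : ∀ i ∈ s, ContDiffAt ℝ (⊤ : ℕ∞) (f i) x) :
    ContDiffAt ℝ (⊤ : ℕ∞) (fun e => ∏ i ∈ s, f i e) x := by
  classical
  induction s using Finset.induction_on with
  | empty => simpa using contDiffAt_const
  | @insert a s hi ih =>
    simp only [Finset.prod_insert hi]
    exact (h a (Finset.mem_insert_self _ _)).mul (ih fun i hi' => h i (Finset.mem_insert_of_mem hi'))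

theorem myContDiffAt_det {S : Type*} [Fintype S] [DecidableEq S]
    {f : E → Matrix S S ℝ} {x : E}
    (hf : ∀ i j, ContDiffAt ℝ (⊤ : ℕ∞) (fun e => f e i j) x) :
    ContDiffAt ℝ (⊤ : ℕ∞) (fun e => (f e).det) x := by
  simp only [Matrix.det_apply']
  refine ContDiffAt.sum fun σ _ => ?_
  exact contDiffAt_const.mul (myContDiffAt_finset_prod fun i _ => hf (σ i) i)

theorem myContDiffAt_inv_entry {S : Type*} [Fintype S] [DecidableEq S]
    {f : E → Matrix S S ℝ} {x : E}
    (hf : ∀ i j, ContDiffAt ℝ (⊤ : ℕ∞) (fun e => f e i j) x)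
    (hdet : (f x).det ≠ 0) (i j : S) :
    ContDiffAt ℝ (⊤ : ℕ∞) (fun e => (f e)⁻¹ i j) x := by
  classical
  simp only [Matrix.inv_def, Matrix.smul_apply, Ring.inverse_eq_inv', smul_eq_mul,
    Matrix.adjugate_apply]
  refine ((myContDiffAt_det hf).inv hdet).mul (myContDiffAt_det fun k l => ?_)
  simp only [Matrix.updateRow_apply]
  by_cases hk : k = j
  · simp only [if_pos hk]; exact contDiffAt_const
  · simpa [hk] using hf k l
end Aux

theorem neumann_facts {S : Type*} [Fintype S] [DecidableEq S] [Nonempty S]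
    {γ : ℝ} (hγ0 : 0 ≤ γ) (hγ1 : γ < 1) {B : Matrix S S ℝ}
    (hB0 : ∀ i j, 0 ≤ B i j) (hB1 : ∀ i, ∑ j, B i j = 1) :
    IsUnit (1 - γ • B).det ∧ (∀ i j, 0 ≤ (1 - γ • B)⁻¹ i j) ∧
      (∀ j, 1 ≤ (1 - γ • B)⁻¹ j j) := by
  classical
  set M : Matrix S S ℝ := 1 - γ • B with hM
  have hinj : Function.Injective M.mulVec := by
    intro v1 v2 h
    have hv : M.mulVec (v1 - v2) = 0 := by rw [Matrix.mulVec_sub, h, sub_self]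
    set v := v1 - v2 with hvdef
    have hveq : v = γ • B.mulVec v := by
      have h2 : v - γ • B.mulVec v = 0 := by
        rwa [hM, Matrix.sub_mulVec, Matrix.one_mulVec, Matrix.smul_mulVec] at hv
      exact (sub_eq_zero.mp h2)
    have hvz : v = 0 := by
      obtain ⟨i0, _, hi0⟩ := Finset.exists_max_image Finset.univ (fun i => |v i|)
        (Finset.univ_nonempty)
      have hbound : |v i0| ≤ γ * |v i0| := by
        have h3 : v i0 = γ * ∑ j, B i0 j * v j := by
          have h4 := congrFun hveq i0
          simpa [Matrix.mulVec, dotProduct, Pi.smul_apply, smul_eq_mul] using h4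
        calc |v i0| = γ * |∑ j, B i0 j * v j| := by
              rw [h3, abs_mul, abs_of_nonneg hγ0]
          _ ≤ γ * ∑ j, B i0 j * |v i0| := by
              refine mul_le_mul_of_nonneg_left ?_ hγ0
              refine (Finset.abs_sum_le_sum_abs _ _).trans (Finset.sum_le_sum fun j _ => ?_)
              rw [abs_mul, abs_of_nonneg (hB0 i0 j)]
              exact mul_le_mul_of_nonneg_left (hi0 j (Finset.mem_univ j)) (hB0 i0 j)
          _ = γ * |v i0| := by rw [← Finset.sum_mul, hB1 i0, one_mul]
      have h0 : |v i0| ≤ 0 := by nlinarith [abs_nonneg (v i0)]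
      funext i
      have := (hi0 i (Finset.mem_univ i)).trans h0
      simpa [abs_nonpos_iff] using this
    exact sub_eq_zero.mp hvz
  have hU : IsUnit M := Matrix.mulVec_injective_iff_isUnit.mp hinj
  have hdet : IsUnit M.det := (Matrix.isUnit_iff_isUnit_det M).mp hU
  have hMN : M * M⁻¹ = 1 := Matrix.mul_nonsing_inv M hdet
  set N := M⁻¹ with hN
  -- powers of B are stochastic
  have hpow : ∀ k : ℕ, (∀ i j, 0 ≤ (B ^ k) i j) ∧ ∀ i, ∑ j, (B ^ k) i j = 1 := by
    intro k
    induction k with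
    | zero =>
      refine ⟨fun i j => ?_, fun i => ?_⟩
      · simp only [pow_zero, Matrix.one_apply]
        split <;> norm_num
      · simp [pow_zero, Matrix.one_apply]
    | succ k ih =>
      constructor
      · intro i j
        rw [pow_succ, Matrix.mul_apply]
        exact Finset.sum_nonneg fun l _ => mul_nonneg (ih.1 i l) (hB0 l j)
      · intro i
        rw [pow_succ]
        simp only [Matrix.mul_apply]
        rw [Finset.sum_comm]
        calc ∑ l, ∑ j, (B ^ k) i l * B l j = ∑ l, (B ^ k) i l * ∑ j, B l j := by
              simp [Finset.mul_sum]
          _ = 1 := by simp [hB1, ih.2 i]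
  have hpowle : ∀ (k : ℕ) i j, (B ^ k) i j ≤ 1 := by
    intro k i j
    calc (B ^ k) i j ≤ ∑ l, (B ^ k) i l :=
          Finset.single_le_sum (fun l _ => (hpow k).1 i l) (Finset.mem_univ j)
      _ = 1 := (hpow k).2 i
  -- geometric identity
  have hident : ∀ k : ℕ, (∑ n ∈ Finset.range k, (γ • B) ^ n) = N - (γ • B) ^ k * N := by
    intro k
    have h1 : (∑ n ∈ Finset.range k, (γ • B) ^ n) * M = 1 - (γ • B) ^ k := by
      have h2 := geom_sum_mul (γ • B) k
      have h5 : M = -((γ • B) - 1) := by rw [hM, neg_sub]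
      rw [h5, mul_neg, h2, neg_sub]
    calc (∑ n ∈ Finset.range k, (γ • B) ^ n)
        = (∑ n ∈ Finset.range k, (γ • B) ^ n) * (M * N) := by rw [hMN, mul_one]
      _ = ((∑ n ∈ Finset.range k, (γ • B) ^ n) * M) * N := by rw [mul_assoc]
      _ = (1 - (γ • B) ^ k) * N := by rw [h1]
      _ = N - (γ • B) ^ k * N := by rw [sub_mul, one_mul]
  -- entrywise limit
  have hlim : ∀ i j, Filter.Tendsto
      (fun k => ∑ n ∈ Finset.range k, γ ^ n * (B ^ n) i j) Filter.atTop (nhds (N i j)) := by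
    intro i j
    have hseq : ∀ k, ∑ n ∈ Finset.range k, γ ^ n * (B ^ n) i j
        = N i j - ((γ • B) ^ k * N) i j := by
      intro k
      have := congrFun (congrFun (hident k) i) j
      simpa [Matrix.sum_apply, Matrix.sub_apply, smul_pow, Matrix.smul_apply,
        smul_eq_mul] using this
    have htail : Filter.Tendsto (fun k => ((γ • B) ^ k * N) i j) Filter.atTop (nhds 0) := by
      have hb : ∀ k, ‖((γ • B) ^ k * N) i j‖ ≤ γ ^ k * ∑ l, |N l j| := by
        intro k
        have : ((γ • B) ^ k * N) i j = γ ^ k * ∑ l, (B ^ k) i l * N l j := by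
          rw [smul_pow, Matrix.smul_mul, Matrix.smul_apply, smul_eq_mul]
          rw [Matrix.mul_apply]
        rw [this]
        rw [Real.norm_eq_abs, abs_mul, abs_of_nonneg (pow_nonneg hγ0 k)]
        refine mul_le_mul_of_nonneg_left ?_ (pow_nonneg hγ0 k)
        refine (Finset.abs_sum_le_sum_abs _ _).trans (Finset.sum_le_sum fun l _ => ?_)
        rw [abs_mul, abs_of_nonneg ((hpow k).1 i l)]
        exact mul_le_of_le_one_left (abs_nonneg _) (hpowle k i l)
      refine squeeze_zero_norm hb ?_
      have := (tendsto_pow_atTop_nhds_zero_of_lt_one hγ0 hγ1).mul_const (∑ l, |N l j|)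
      simpa using this
    have : Filter.Tendsto (fun k => N i j - ((γ • B) ^ k * N) i j) Filter.atTop
        (nhds (N i j - 0)) := tendsto_const_nhds.sub htail
    rw [sub_zero] at this
    exact this.congr fun k => (hseq k).symm
  refine ⟨hdet, fun i j => ?_, fun j => ?_⟩
  · refine ge_of_tendsto' (hlim i j) fun k => ?_
    exact Finset.sum_nonneg fun n _ => mul_nonneg (pow_nonneg hγ0 n) ((hpow n).1 i j)
  · refine ge_of_tendsto (hlim j j) ?_
    filter_upwards [Filter.eventually_ge_atTop 1] with k hk
    calc (1 : ℝ) = γ ^ 0 * (B ^ 0) j j := by simp [Matrix.one_apply]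
      _ ≤ ∑ n ∈ Finset.range k, γ ^ n * (B ^ n) j j := by
          refine Finset.single_le_sum (fun n _ => mul_nonneg (pow_nonneg hγ0 n) ((hpow n).1 j j))
            ?_
          exact Finset.mem_range.mpr hk

theorem stmt_18 {S A : Type*} [Fintype S] [Fintype A] [Nonempty S] [Nonempty A] [DecidableEq S]
    (γ : ℝ) (hγ0 : 0 ≤ γ) (hγ1 : γ < 1)
    (P : S → A → S → ℝ) (hP : ∀ s a s', 0 ≤ P s a s')
    (hPsum : ∀ s a, ∑ s', P s a s' = 1)
    (μ : S → ℝ) (hμ : ∀ s, 0 < μ s) (hμsum : ∑ s, μ s = 1)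
    (R₀ : S → A → ℝ) (α : ℝ) (hα : 0 < α)
    (p q : ℝ) (hp : 1 < p) (hq : q = p / (p - 1))
    (D : (S → A → ℝ) → S → A → ℝ)
    (hD : ∀ (π : S → A → ℝ) s a, D π s a = dPi γ P μ π s * π s a)
    (F : (S → A → ℝ) → ℝ)
    (hF : ∀ π : S → A → ℝ, F π =
      (∑ s, ∑ a, D π s a * R₀ s a) - α * (∑ s, ∑ a, D π s a ^ q) ^ (1 / q)) :
    ∀ π : S → A → ℝ, IsPolicy π → (∀ s a, 0 < π s a) →
      ContDiffAt ℝ (⊤ : ℕ∞) F π ∧ ∀ s a, 0 < D π s a := by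
  classical
  intro π hpol hπpos
  obtain ⟨hπ0, hπ1⟩ := hpol
  have hB0 : ∀ i j, 0 ≤ Pmat P π i j := fun i j =>
    Finset.sum_nonneg fun a _ => mul_nonneg (hπ0 i a) (hP i a j)
  have hB1 : ∀ i, ∑ j, Pmat P π i j = 1 := by
    intro i
    unfold Pmat
    rw [Finset.sum_comm]
    simp_rw [← Finset.mul_sum, hPsum]
    simpa using hπ1 i
  obtain ⟨hdet, hNnn, hNdiag⟩ := neumann_facts hγ0 hγ1 hB0 hB1
  have hdet0 : (1 - γ • Pmat P π).det ≠ 0 := hdet.ne_zero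
  -- positivity of D
  have hdPipos : ∀ s, 0 < dPi γ P μ π s := by
    intro s
    unfold dPi
    have h2 : 0 < μ s * (1 - γ • Pmat P π)⁻¹ s s :=
      mul_pos (hμ s) (lt_of_lt_of_le one_pos (hNdiag s))
    calc (0:ℝ) < μ s * (1 - γ • Pmat P π)⁻¹ s s := h2
      _ ≤ ∑ s0, μ s0 * (1 - γ • Pmat P π)⁻¹ s0 s :=
        Finset.single_le_sum (fun s0 _ => mul_nonneg (hμ s0).le (hNnn s0 s))
          (Finset.mem_univ s)
  have hDpos : ∀ s a, 0 < D π s a := by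
    intro s a
    rw [hD]
    exact mul_pos (hdPipos s) (hπpos s a)
  refine ⟨?_, hDpos⟩
  -- smoothness
  have hFeq : F = fun π' : S → A → ℝ =>
      (∑ s, ∑ a, (dPi γ P μ π' s * π' s a) * R₀ s a) -
        α * (∑ s, ∑ a, (dPi γ P μ π' s * π' s a) ^ q) ^ (1 / q) := by
    funext π'
    simp_rw [hF π', hD π']
  rw [hFeq]
  have hev : ∀ (s : S) (a : A), ContDiffAt ℝ (⊤ : ℕ∞) (fun π' : S → A → ℝ => π' s a) π := by
    intro s a
    have h1 : ContDiff ℝ (⊤ : ℕ∞) (fun π' : S → A → ℝ => π' s) :=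
      (contDiff_pi.mp contDiff_id) s
    exact ((contDiff_pi.mp h1) a).contDiffAt
  have hMent : ∀ i j, ContDiffAt ℝ (⊤ : ℕ∞)
      (fun π' : S → A → ℝ => (1 - γ • Pmat P π') i j) π := by
    intro i j
    have heq : (fun π' : S → A → ℝ => (1 - γ • Pmat P π') i j)
        = fun π' : S → A → ℝ => (1 : Matrix S S ℝ) i j - γ * ∑ a, π' i a * P i a j := by
      funext π'
      simp [Matrix.sub_apply, Matrix.smul_apply, smul_eq_mul, Pmat]
    rw [heq]
    exact contDiffAt_const.sub (contDiffAt_const.mul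
      (ContDiffAt.sum fun a _ => (hev i a).mul contDiffAt_const))
  have hNent : ∀ i j, ContDiffAt ℝ (⊤ : ℕ∞)
      (fun π' : S → A → ℝ => (1 - γ • Pmat P π')⁻¹ i j) π := fun i j =>
    myContDiffAt_inv_entry (f := fun π' : S → A → ℝ => 1 - γ • Pmat P π')
      (fun i j => hMent i j) hdet0 i j
  have hdPiC : ∀ s, ContDiffAt ℝ (⊤ : ℕ∞) (fun π' : S → A → ℝ => dPi γ P μ π' s) π := by
    intro s
    unfold dPi
    exact ContDiffAt.sum fun s0 _ => contDiffAt_const.mul (hNent s0 s)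
  have hDC : ∀ s a, ContDiffAt ℝ (⊤ : ℕ∞)
      (fun π' : S → A → ℝ => dPi γ P μ π' s * π' s a) π := fun s a =>
    (hdPiC s).mul (hev s a)
  have hDpos' : ∀ s a, 0 < dPi γ P μ π s * π s a := fun s a => by
    have := hDpos s a; rwa [hD] at this
  have hterm1 : ContDiffAt ℝ (⊤ : ℕ∞)
      (fun π' : S → A → ℝ => ∑ s, ∑ a, (dPi γ P μ π' s * π' s a) * R₀ s a) π :=
    ContDiffAt.sum fun s _ => ContDiffAt.sum fun a _ => (hDC s a).mul contDiffAt_const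
  have hG : ContDiffAt ℝ (⊤ : ℕ∞)
      (fun π' : S → A → ℝ => ∑ s, ∑ a, (dPi γ P μ π' s * π' s a) ^ q) π :=
    ContDiffAt.sum fun s _ => ContDiffAt.sum fun a _ =>
      (hDC s a).rpow_const_of_ne (hDpos' s a).ne'
  have hGpos : 0 < ∑ s, ∑ a, (dPi γ P μ π s * π s a) ^ q := by
    refine Finset.sum_pos (fun s _ => ?_) Finset.univ_nonempty
    exact Finset.sum_pos (fun a _ => Real.rpow_pos_of_pos (hDpos' s a) q) Finset.univ_nonempty
  exact hterm1.sub (contDiffAt_const.mul (hG.rpow_const_of_ne hGpos.ne'))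
end
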